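/- arXiv:0803.2656 — 4 statements merged into one kernel-verified Lean document; each statement's English description precedes it below -/
import Mathlib

section
/- Let E be a sublinear functional on (Ω, H), i.e. E : H → ℝ satisfies sub-additivity (E[X] − E[Y] ≤ E[X − Y] for all X, Y ∈ H) and positive homogeneity (E[λX] = λE[X] for all λ ≥ 0). Then there exists a family Q of linear functionals on H such that E[X] = sup_{L ∈ Q} L[X] for every X ∈ H, and such that for each X ∈ H there exists L ∈ Q with E[X] = L[X]. If moreover E is monotone (X ≥ Y pointwise implies E[X] ≥ E[Y]), then every L ∈ Q is monotone; if in addition E preserves constants (E[c] = c for every constant c), then every L ∈ Q preserves constants. -/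
/-- Representation of a sublinear functional as a supremum of dominated linear
functionals, with the supremum attained, and preservation of monotonicity and
constant-preservation by the representing family. -/
theorem stmt_0 {Ω : Type*} (H : Set (Ω → ℝ))
    (Hconst : ∀ c : ℝ, (fun _ => c) ∈ H)
    (Hadd : ∀ X ∈ H, ∀ Y ∈ H, X + Y ∈ H)
    (Hsmul : ∀ X ∈ H, ∀ c : ℝ, c • X ∈ H)
    (Habs : ∀ X ∈ H, (fun ω => |X ω|) ∈ H)
    (E : (Ω → ℝ) → ℝ)
    (hsub : ∀ X ∈ H, ∀ Y ∈ H, E X - E Y ≤ E (X - Y))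
    (hpos : ∀ X ∈ H, ∀ l : ℝ, 0 ≤ l → E (l • X) = l * E X) :
    ∃ Q : Set ((Ω → ℝ) → ℝ),
      (∀ L ∈ Q, (∀ X ∈ H, ∀ Y ∈ H, L (X + Y) = L X + L Y) ∧
        (∀ X ∈ H, ∀ c : ℝ, L (c • X) = c * L X)) ∧
      (∀ X ∈ H, IsGreatest ((fun L => L X) '' Q) (E X)) ∧
      ((∀ X ∈ H, ∀ Y ∈ H, (∀ ω, Y ω ≤ X ω) → E Y ≤ E X) →
        ∀ L ∈ Q, ∀ X ∈ H, ∀ Y ∈ H, (∀ ω, Y ω ≤ X ω) → L Y ≤ L X) ∧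
      ((∀ X ∈ H, ∀ Y ∈ H, (∀ ω, Y ω ≤ X ω) → E Y ≤ E X) →
        (∀ c : ℝ, E (fun _ => c) = c) →
        ∀ L ∈ Q, ∀ c : ℝ, L (fun _ => c) = c) := by
  classical
  -- H as a submodule
  set V : Submodule ℝ (Ω → ℝ) :=
    { carrier := H
      add_mem' := fun {a b} ha hb => Hadd a ha b hb
      zero_mem' := Hconst 0
      smul_mem' := fun c a ha => Hsmul a ha c } with hV
  have hmemV : ∀ {X : Ω → ℝ}, X ∈ V ↔ X ∈ H := Iff.rfl
  have hE0 : E (0 : Ω → ℝ) = 0 := by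
    have := hpos (fun _ => (0:ℝ)) (Hconst 0) 0 le_rfl
    simpa using this
  have hneg : ∀ X ∈ H, -X ∈ H := fun X hX => by
    simpa using Hsmul X hX (-1)
  have hsubmem : ∀ X ∈ H, ∀ Y ∈ H, X - Y ∈ H := fun X hX Y hY => by
    have := Hadd X hX (-Y) (hneg Y hY)
    simpa [sub_eq_add_neg] using this
  have hEadd : ∀ X ∈ H, ∀ Y ∈ H, E (X + Y) ≤ E X + E Y := by
    intro X hX Y hY
    have h := hsub (X + Y) (Hadd X hX Y hY) Y hY
    have h2 : X + Y - Y = X := by ring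
    rw [h2] at h
    linarith
  have hEnegle : ∀ X ∈ H, -E X ≤ E (-X) := by
    intro X hX
    have := hEadd X hX (-X) (hneg X hX)
    simp at this
    rw [hE0] at this
    linarith
  -- sublinear functional on V
  set N : V → ℝ := fun v => E ↑v with hN
  have N_hom : ∀ c : ℝ, 0 < c → ∀ x : V, N (c • x) = c * N x := by
    intro c hc x
    exact hpos ↑x x.2 c hc.le
  have N_add : ∀ x y : V, N (x + y) ≤ N x + N y := by
    intro x y
    exact hEadd ↑x x.2 ↑y y.2
  -- key: for each x there is a dominated linear functional attaining E at x
  have key : ∀ x : V, ∃ g : V →ₗ[ℝ] ℝ, (∀ v : V, g v ≤ E ↑v) ∧ g x = E ↑x := by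
    intro x
    have Hc : ∀ c : ℝ, c • x = 0 → c • (E ↑x) = 0 := by
      intro c hc
      rcases smul_eq_zero.1 hc with h | h
      · rw [h, zero_smul]
      · rw [h]
        simp [hE0]
    set f : V →ₗ.[ℝ] ℝ := LinearPMap.mkSpanSingleton' x (E ↑x) Hc with hf
    have hdom : f.domain = Submodule.span ℝ {x} :=
      LinearPMap.domain_mkSpanSingleton x (E ↑x) Hc
    have hfle : ∀ y : f.domain, f y ≤ N ↑y := by
      rintro ⟨y, hy⟩
      rw [hdom] at hy
      rcases Submodule.mem_span_singleton.1 hy with ⟨c, rfl⟩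
      have hmem : c • x ∈ f.domain := by
        rw [hdom]; exact Submodule.smul_mem _ c (Submodule.mem_span_singleton_self x)
      have happ : f ⟨c • x, hmem⟩ = c • (E ↑x) :=
        LinearPMap.mkSpanSingleton'_apply x (E ↑x) Hc c _
      rw [happ]
      rcases le_or_gt 0 c with hc | hc
      · have : N (c • x) = c * E ↑x := hpos ↑x x.2 c hc
        rw [this]
        simp [smul_eq_mul]
      · have h1 : (c • x : V) = (-c) • (-x) := by simp
        have h2 : N (c • x) = (-c) * E (-(↑x : Ω → ℝ)) := by
          rw [h1]
          have := hpos (-(↑x : Ω → ℝ)) (hneg ↑x x.2) (-c) (by linarith)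
          simpa [hN] using this
        have h3 := hEnegle ↑x x.2
        rw [h2]
        have : c * E ↑x ≤ (-c) * E (-(↑x : Ω → ℝ)) := by nlinarith
        simpa [smul_eq_mul] using this
    obtain ⟨g, hg1, hg2⟩ := exists_extension_of_le_sublinear f N N_hom N_add hfle
    refine ⟨g, hg2, ?_⟩
    have hxmem : x ∈ f.domain := by
      rw [hdom]; exact Submodule.mem_span_singleton_self x
    have := hg1 ⟨x, hxmem⟩
    rw [this]
    exact LinearPMap.mkSpanSingleton'_apply_self x (E ↑x) Hc _
  -- the representing family
  refine ⟨{ L | ∃ g : V →ₗ[ℝ] ℝ, (∀ v : V, g v ≤ E ↑v) ∧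
      L = fun X => if h : X ∈ H then g ⟨X, h⟩ else 0 }, ?_, ?_, ?_, ?_⟩
  · rintro L ⟨g, hgle, rfl⟩
    constructor
    · intro X hX Y hY
      beta_reduce
      rw [dif_pos (Hadd X hX Y hY), dif_pos hX, dif_pos hY]
      have : (⟨X + Y, Hadd X hX Y hY⟩ : V) = ⟨X, hX⟩ + ⟨Y, hY⟩ := rfl
      rw [this, map_add]
    · intro X hX c
      beta_reduce
      rw [dif_pos (Hsmul X hX c), dif_pos hX]
      have : (⟨c • X, Hsmul X hX c⟩ : V) = c • (⟨X, hX⟩ : V) := rfl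
      rw [this, map_smul, smul_eq_mul]
  · intro X hX
    constructor
    · obtain ⟨g, hgle, hgx⟩ := key ⟨X, hX⟩
      exact ⟨fun Y => if h : Y ∈ H then g ⟨Y, h⟩ else 0, ⟨g, hgle, rfl⟩,
        by simp only [dif_pos hX]; exact hgx⟩
    · rintro r ⟨L, ⟨g, hgle, rfl⟩, rfl⟩
      simp only [dif_pos hX]
      exact hgle ⟨X, hX⟩
  · rintro hmono L ⟨g, hgle, rfl⟩ X hX Y hY hle
    beta_reduce
    rw [dif_pos hX, dif_pos hY]
    have h1 : g (⟨Y, hY⟩ - ⟨X, hX⟩ : V) ≤ E (Y - X) := hgle _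
    have h2 : E (Y - X) ≤ E (fun _ => (0:ℝ)) := by
      refine hmono (fun _ => 0) (Hconst 0) (Y - X) (hsubmem Y hY X hX) ?_
      intro ω
      simpa using hle ω
    have h3 : E (fun _ => (0:ℝ)) = 0 := hE0
    rw [map_sub] at h1
    linarith
  · rintro hmono hEc L ⟨g, hgle, rfl⟩ c
    beta_reduce
    rw [dif_pos (Hconst c)]
    have h1 : g ⟨fun _ => c, Hconst c⟩ ≤ c := by
      have := hgle ⟨fun _ => c, Hconst c⟩
      rwa [hEc c] at this
    have h2 : g (-(⟨fun _ => c, Hconst c⟩ : V)) ≤ -c := by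
      have := hgle (-(⟨fun _ => c, Hconst c⟩ : V))
      have heq : ((-(⟨fun _ => c, Hconst c⟩ : V) : V) : Ω → ℝ) = fun _ => -c := by
        funext ω; simp
      rw [heq, hEc (-c)] at this
      exact this
    rw [map_neg] at h2
    linarith
end

section
/- Let G : ℝᵈ × S(d) → ℝ satisfy: G(p + p̄, A + Ā) ≤ G(p, A) + G(p̄, Ā); G(λp, λA) = λG(p, A) for all λ ≥ 0; G(p, A) ≥ G(p, Ā) whenever A ≥ Ā; and G is continuous at (0, 0). Then there exists a bounded subset Θ ⊂ ℝᵈ × ℝ^{d×d} such that G(p, A) = sup_{(q,Q) ∈ Θ} [ ½ tr(A Q Qᵀ) + ⟨p, q⟩ ] for all (p, A) ∈ ℝᵈ × S(d). -/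
noncomputable section

open Matrix in
private lemma exists_dominated_eq {E : Type*} [AddCommGroup E] [Module ℝ E]
    (N : E → ℝ) (N_hom : ∀ c : ℝ, 0 < c → ∀ x, N (c • x) = c * N x)
    (N_add : ∀ x y, N (x + y) ≤ N x + N y) (hN0 : N 0 = 0) (x₀ : E) :
    ∃ g : E →ₗ[ℝ] ℝ, (∀ x, g x ≤ N x) ∧ g x₀ = N x₀ := by
  have key : ∀ c : ℝ, ∀ x : E, c * N x ≤ N (c • x) := by
    intro c x
    rcases lt_trichotomy c 0 with hc | hc | hc
    · have h1 : N ((-c) • x) = (-c) * N x := N_hom (-c) (by linarith) x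
      have h2 : N (c • x) + N ((-c) • x) ≥ N 0 := by
        have := N_add (c • x) ((-c) • x)
        simpa [← add_smul] using this
      rw [hN0] at h2; nlinarith
    · simp [hc, hN0]
    · exact (N_hom c hc x).ge
  by_cases hx : x₀ = 0
  · obtain ⟨g, hg1, hg2⟩ := exists_extension_of_le_sublinear ⟨⊥, 0⟩ N N_hom N_add
      (fun x => by
        have hx0 : (x : E) = 0 := (Submodule.mem_bot ℝ).1 x.2
        simp [hx0, hN0])
    exact ⟨g, hg2, by simp [hx, hN0]⟩
  · obtain ⟨g, hg1, hg2⟩ := exists_extension_of_le_sublinear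
      (LinearPMap.mkSpanSingleton x₀ (N x₀) hx) N N_hom N_add
      (fun x => by
        obtain ⟨c, hc⟩ := Submodule.mem_span_singleton.1 x.2
        have hxeq : x = ⟨c • x₀, Submodule.smul_mem _ c (Submodule.mem_span_singleton_self x₀)⟩ :=
          Subtype.ext hc.symm
        rw [hxeq, LinearPMap.mkSpanSingleton'_apply]
        simpa [smul_eq_mul] using key c x₀)
    refine ⟨g, hg2, ?_⟩
    have := hg1 ⟨x₀, Submodule.mem_span_singleton_self x₀⟩
    rw [this, LinearPMap.mkSpanSingleton_apply]


open scoped MatrixOrder in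
open Matrix in
private lemma linear_repr {d : ℕ}
    (g : (EuclideanSpace ℝ (Fin d) × Matrix (Fin d) (Fin d) ℝ) →ₗ[ℝ] ℝ)
    (hgpos : ∀ S : Matrix (Fin d) (Fin d) ℝ, S.PosSemidef → 0 ≤ g (0, S)) :
    ∃ (q : EuclideanSpace ℝ (Fin d)) (Q : Matrix (Fin d) (Fin d) ℝ),
      (∀ p A, A.IsSymm →
        (1 / 2) * Matrix.trace (A * (Q * Q.transpose)) + (inner ℝ p q : ℝ) = g (p, A)) ∧
      (inner ℝ q q : ℝ) = g (q, 0) ∧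
      ∀ i j, (Q i j) ^ 2 ≤ 2 * g (0, Matrix.single i i 1) := by
  classical
  set B : Matrix (Fin d) (Fin d) ℝ :=
    Matrix.of (fun i j => g (0, Matrix.single i j 1)) with hB
  have hphi : ∀ A : Matrix (Fin d) (Fin d) ℝ, g (0, A) = ∑ i, ∑ j, A i j * B i j := by
    intro A
    have hA : ((0 : EuclideanSpace ℝ (Fin d)), A)
        = ∑ i, ∑ j, (A i j) • ((0 : EuclideanSpace ℝ (Fin d)), Matrix.single i j (1 : ℝ)) := by
      rw [Prod.ext_iff]
      constructor
      · simp [Prod.fst_sum]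
      · simp only [Prod.snd_sum, Prod.smul_mk, Matrix.smul_single, smul_eq_mul, mul_one]
        exact Matrix.matrix_eq_sum_single A
    rw [hA]
    rw [map_sum]
    refine Finset.sum_congr rfl fun i _ => ?_
    rw [map_sum]
    refine Finset.sum_congr rfl fun j _ => ?_
    rw [_root_.map_smul, smul_eq_mul, hB]
    rfl
  set q : EuclideanSpace ℝ (Fin d) := WithLp.toLp 2 (fun i => g (EuclideanSpace.single i 1, 0)) with hq
  have hgp : ∀ p : EuclideanSpace ℝ (Fin d), g (p, 0) = ∑ i, p i * q i := by
    intro p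
    have hp : (p, (0 : Matrix (Fin d) (Fin d) ℝ))
        = ∑ i, (p i) • ((EuclideanSpace.single i (1 : ℝ)), (0 : Matrix (Fin d) (Fin d) ℝ)) := by
      rw [Prod.ext_iff]
      constructor
      · ext j
        simp only [Prod.fst_sum, Prod.smul_mk]
        rw [WithLp.ofLp_sum, Finset.sum_apply]
        simp [EuclideanSpace.single_apply]
      · simp [Prod.snd_sum]
    rw [hp, map_sum]
    refine Finset.sum_congr rfl fun i _ => ?_
    rw [_root_.map_smul, smul_eq_mul, hq]
  have hinner : ∀ p p' : EuclideanSpace ℝ (Fin d), (inner ℝ p p' : ℝ) = ∑ i, p i * p' i := by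
    intro p p'
    simp [PiLp.inner_apply, RCLike.inner_apply, mul_comm]
  set Lmat : Matrix (Fin d) (Fin d) ℝ := Matrix.of (fun i j => B i j + B j i) with hL
  have hLher : Lmat.IsHermitian := by
    ext i j
    simp [hL, Matrix.conjTranspose_apply, add_comm]
  have hLpsd : Lmat.PosSemidef := by
    refine .of_dotProduct_mulVec_nonneg hLher fun x => ?_
    have hxx : (Matrix.vecMulVec x x).PosSemidef := by
      have : Matrix.vecMulVec x x = (Matrix.replicateRow Unit x)ᴴ * Matrix.replicateRow Unit x := by
        rw [Matrix.conjTranspose_replicateRow, Matrix.vecMulVec_eq Unit, star_trivial]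
      rw [this]
      exact Matrix.posSemidef_conjTranspose_mul_self _
    have e1 : dotProduct (star x) (Lmat *ᵥ x) = 2 * ∑ i, ∑ j, (Matrix.vecMulVec x x) i j * B i j := by
      have hterm : ∀ i j : Fin d, x i * ((B i j + B j i) * x j)
          = x i * x j * B i j + x j * x i * B j i := by intro i j; ring
      simp only [dotProduct, Matrix.mulVec, star_trivial, Pi.star_apply,
        dotProduct, hL, Matrix.of_apply, Finset.mul_sum]
      simp_rw [hterm, Finset.sum_add_distrib]
      rw [Finset.sum_comm (f := fun i j => x j * x i * B j i)]
      simp only [Matrix.vecMulVec_apply]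
      simp_rw [two_mul, Finset.sum_add_distrib]
    rw [e1, ← hphi]
    have := hgpos _ hxx
    linarith
  set Q : Matrix (Fin d) (Fin d) ℝ := CFC.sqrt Lmat with hQ
  have hQsymm : Q.transpose = Q := by
    have h : Qᴴ = Q := (CFC.sqrt_nonneg Lmat).isSelfAdjoint.star_eq
    rwa [Matrix.conjTranspose_eq_transpose_of_trivial] at h
  have hQQ : Q * Q.transpose = Lmat := by
    rw [hQsymm]
    exact CFC.sqrt_mul_sqrt_self Lmat hLpsd.nonneg
  refine ⟨q, Q, ?_, ?_, ?_⟩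
  · intro p A hAs
    have htr : Matrix.trace (A * Lmat) = 2 * ∑ i, ∑ j, A i j * B i j := by
      have hterm : ∀ i k : Fin d, A i k * (B k i + B i k)
          = A i k * B k i + A i k * B i k := by intro i k; ring
      simp only [Matrix.trace, Matrix.diag, Matrix.mul_apply, hL, Matrix.of_apply]
      simp_rw [hterm, Finset.sum_add_distrib]
      rw [Finset.sum_comm (f := fun i k => A i k * B k i)]
      have h4 : ∀ i k : Fin d, A k i * B i k = A i k * B i k := by
        intro i k
        rw [hAs.apply k i]
      simp_rw [h4]
      rw [two_mul]
    have hsplit : (p, A) = ((p, (0 : Matrix (Fin d) (Fin d) ℝ)) + ((0 : EuclideanSpace ℝ (Fin d)), A)) := by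
      simp
    rw [hQQ, htr, hinner, hsplit, map_add, hphi, hgp]
    ring
  · rw [hinner, hgp]
  · intro i j
    have h1 : (Q i j) ^ 2 ≤ ∑ k, (Q i k) ^ 2 := by
      exact Finset.single_le_sum (f := fun k => (Q i k) ^ 2)
        (fun k _ => sq_nonneg _) (Finset.mem_univ j)
    have h2 : ∑ k, (Q i k) ^ 2 = Lmat i i := by
      rw [← hQQ]
      simp [Matrix.mul_apply, Matrix.transpose_apply, sq]
    have h3 : Lmat i i = 2 * g (0, Matrix.single i i 1) := by
      show B i i + B i i = _
      rw [two_mul]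
      rfl
    rw [h2, h3] at h1
    exact h1


open Matrix in
/-- Representation theorem for a sublinear function `G` on `ℝᵈ × S(d)` that is monotone
in the matrix argument and continuous at `(0,0)`: there is a bounded set
`Θ ⊂ ℝᵈ × ℝ^{d×d}` with `G(p, A) = sup_{(q,Q) ∈ Θ} [½ tr(A Q Qᵀ) + ⟨p, q⟩]`. -/
theorem stmt_3 {d : ℕ}
    (G : EuclideanSpace ℝ (Fin d) → Matrix (Fin d) (Fin d) ℝ → ℝ)
    (hsub : ∀ p p' A A', A.IsSymm → A'.IsSymm →
      G (p + p') (A + A') ≤ G p A + G p' A')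
    (hpos : ∀ p A, A.IsSymm → ∀ l : ℝ, 0 ≤ l → G (l • p) (l • A) = l * G p A)
    (hmono : ∀ p A A', A.IsSymm → A'.IsSymm → (A - A').PosSemidef → G p A' ≤ G p A)
    (hcont : ∀ ε > (0 : ℝ), ∃ δ > (0 : ℝ), ∀ p A, A.IsSymm →
      ‖p‖ < δ → (∀ i j, |A i j| < δ) → |G p A - G 0 0| < ε) :
    ∃ Θ : Set (EuclideanSpace ℝ (Fin d) × Matrix (Fin d) (Fin d) ℝ),
      (∃ M : ℝ, ∀ z ∈ Θ, ‖z.1‖ ≤ M ∧ ∀ i j, |z.2 i j| ≤ M) ∧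
      ∀ p A, A.IsSymm →
        IsLUB {r : ℝ | ∃ z ∈ Θ,
          r = (1 / 2) * Matrix.trace (A * (z.2 * z.2.transpose)) + (inner ℝ p z.1 : ℝ)} (G p A) := by
  classical
  have hG00 : G 0 0 = 0 := by
    have h := hpos 0 0 Matrix.isSymm_zero 0 le_rfl
    simpa using h
  obtain ⟨δ, hδpos, hδ⟩ := hcont 1 one_pos
  set N : EuclideanSpace ℝ (Fin d) × Matrix (Fin d) (Fin d) ℝ → ℝ :=
    fun x => G x.1 ((1/2 : ℝ) • (x.2 + x.2ᵀ)) with hN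
  have hsym : ∀ A : Matrix (Fin d) (Fin d) ℝ, ((1/2 : ℝ) • (A + Aᵀ)).IsSymm := by
    intro A
    apply Matrix.IsSymm.ext
    intro i j
    simp only [Matrix.smul_apply, Matrix.add_apply, Matrix.transpose_apply, smul_eq_mul]
    ring
  have hsymEq : ∀ A : Matrix (Fin d) (Fin d) ℝ, A.IsSymm → (1/2 : ℝ) • (A + Aᵀ) = A := by
    intro A hA
    rw [Matrix.IsSymm] at hA
    rw [hA, ← two_smul ℝ A, smul_smul]
    norm_num
  have hNsymm : ∀ p A, A.IsSymm → N (p, A) = G p A := by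
    intro p A hA
    show G p ((1/2 : ℝ) • (A + Aᵀ)) = G p A
    rw [hsymEq A hA]
  have N_add : ∀ x y, N (x + y) ≤ N x + N y := by
    intro x y
    have e : (1/2 : ℝ) • ((x.2 + y.2) + (x.2 + y.2)ᵀ)
        = (1/2 : ℝ) • (x.2 + x.2ᵀ) + (1/2 : ℝ) • (y.2 + y.2ᵀ) := by
      rw [Matrix.transpose_add, ← smul_add]
      congr 1
      abel
    have h := hsub x.1 y.1 ((1/2:ℝ) • (x.2 + x.2ᵀ)) ((1/2:ℝ) • (y.2 + y.2ᵀ)) (hsym _) (hsym _)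
    show G (x.1 + y.1) ((1/2 : ℝ) • ((x.2 + y.2) + (x.2 + y.2)ᵀ)) ≤ _
    rw [e]
    exact h
  have N_hom : ∀ c : ℝ, 0 < c → ∀ x, N (c • x) = c * N x := by
    intro c hc x
    have e : (1/2 : ℝ) • ((c • x.2) + (c • x.2)ᵀ) = c • ((1/2 : ℝ) • (x.2 + x.2ᵀ)) := by
      rw [Matrix.transpose_smul, ← smul_add, smul_comm]
    show G (c • x.1) ((1/2 : ℝ) • ((c • x.2) + (c • x.2)ᵀ)) = c * N x
    rw [e]
    exact hpos x.1 _ (hsym _) c hc.le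
  have hN0 : N 0 = 0 := by
    show G 0 ((1/2 : ℝ) • ((0 : Matrix (Fin d) (Fin d) ℝ) + (0 : Matrix (Fin d) (Fin d) ℝ)ᵀ)) = 0
    rw [Matrix.transpose_zero, add_zero, smul_zero]
    exact hG00
  have hNbound : ∀ x : EuclideanSpace ℝ (Fin d) × Matrix (Fin d) (Fin d) ℝ,
      ‖x.1‖ ≤ δ/2 → (∀ i j, |x.2 i j| ≤ δ/2) → N x ≤ 1 := by
    intro x hp hA
    have hent : ∀ i j, |((1/2 : ℝ) • (x.2 + x.2ᵀ)) i j| < δ := by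
      intro i j
      have h1 := hA i j
      have h2 := hA j i
      have e : ((1/2 : ℝ) • (x.2 + x.2ᵀ)) i j = (1/2) * (x.2 i j + x.2 j i) := by
        simp [Matrix.smul_apply, Matrix.add_apply, Matrix.transpose_apply]
      rw [e]
      have h3 : |x.2 i j + x.2 j i| ≤ |x.2 i j| + |x.2 j i| := abs_add_le _ _
      rw [abs_mul, abs_of_nonneg (by norm_num : (0:ℝ) ≤ 1/2)]
      nlinarith
    have h := hδ x.1 _ (hsym x.2) (lt_of_le_of_lt hp (by linarith)) hent
    rw [hG00, sub_zero] at h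
    exact le_of_lt (lt_of_le_of_lt (le_abs_self _) h)
  set M : ℝ := max (2/δ) (Real.sqrt (4/δ)) with hM
  set Θ : Set (EuclideanSpace ℝ (Fin d) × Matrix (Fin d) (Fin d) ℝ) :=
    {z | (‖z.1‖ ≤ M ∧ ∀ i j, |z.2 i j| ≤ M) ∧
      ∀ p A, A.IsSymm →
        (1 / 2) * Matrix.trace (A * (z.2 * z.2.transpose)) + (inner ℝ p z.1 : ℝ) ≤ G p A} with hΘ
  refine ⟨Θ, ⟨M, fun z hz => hz.1⟩, ?_⟩
  intro p A hA
  constructor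
  · rintro r ⟨z, hz, rfl⟩
    exact hz.2 p A hA
  · intro b hb
    obtain ⟨g, hgle, hgeq⟩ := exists_dominated_eq N N_hom N_add hN0 (p, A)
    have hgpos : ∀ S : Matrix (Fin d) (Fin d) ℝ, S.PosSemidef → 0 ≤ g (0, S) := by
      intro S hS
      have hSsymm : S.IsSymm := by
        have h := hS.1
        rwa [Matrix.IsHermitian, Matrix.conjTranspose_eq_transpose_of_trivial] at h
      have hnegsymm : (-S).IsSymm := by
        rw [Matrix.IsSymm, Matrix.transpose_neg, hSsymm]
      have h1 : g (0, -S) ≤ N (0, -S) := hgle _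
      have h2 : N (0, -S) = G 0 (-S) := hNsymm 0 _ hnegsymm
      have h3 : G 0 (-S) ≤ G 0 0 :=
        hmono 0 0 (-S) Matrix.isSymm_zero hnegsymm (by simpa using hS)
      have h4 : g (0, S) + g (0, -S) = 0 := by
        rw [← map_add]
        have e : ((0 : EuclideanSpace ℝ (Fin d)), S) + (0, -S) = 0 := by
          ext <;> simp
        rw [e, map_zero]
      linarith
    obtain ⟨q, Q, hrepr, hqq, hQb⟩ := linear_repr g hgpos
    have hmem : (q, Q) ∈ Θ := by
      refine ⟨⟨?_, ?_⟩, ?_⟩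
      · -- ‖q‖ ≤ M
        by_cases hq0 : q = 0
        · rw [hq0, norm_zero]
          exact le_trans (by positivity) (le_max_left (2/δ) _)
        · have hqn : 0 < ‖q‖ := norm_pos_iff.2 hq0
          set c : ℝ := δ / (2 * ‖q‖) with hc
          have hcpos : 0 < c := by positivity
          have h1 : g (c • q, 0) = c * g (q, 0) := by
            have e : ((c • q : EuclideanSpace ℝ (Fin d)), (0 : Matrix (Fin d) (Fin d) ℝ))
                = c • (q, (0 : Matrix (Fin d) (Fin d) ℝ)) := by
              rw [Prod.smul_mk, smul_zero]
            rw [e, _root_.map_smul, smul_eq_mul]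
          have hnorm : ‖(c • q : EuclideanSpace ℝ (Fin d))‖ = δ/2 := by
            rw [norm_smul, Real.norm_eq_abs, abs_of_pos hcpos, hc]
            field_simp
          have h2 : g (c • q, 0) ≤ 1 := by
            refine le_trans (hgle _) (hNbound _ (le_of_eq hnorm) ?_)
            intro i j
            simp only [Matrix.zero_apply, abs_zero]
            positivity
          have h3 : g (q, (0 : Matrix (Fin d) (Fin d) ℝ)) = ‖q‖^2 := by
            rw [← hqq, real_inner_self_eq_norm_sq]
          have h5 : δ/2 * ‖q‖ ≤ 1 := by
            rw [h3, hc] at h1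
            have : δ / (2 * ‖q‖) * ‖q‖^2 = δ/2 * ‖q‖ := by
              field_simp
            rw [this] at h1
            linarith [h1 ▸ h2]
          have h6 : ‖q‖ ≤ 2/δ := by
            rw [le_div_iff₀ hδpos]
            nlinarith
          exact le_trans h6 (le_max_left _ _)
      · -- entries of Q
        intro i j
        have h1 := hQb i j
        have h3 : g (0, (δ/2) • Matrix.single i i (1:ℝ))
            = (δ/2) * g (0, Matrix.single i i 1) := by
          have e : ((0 : EuclideanSpace ℝ (Fin d)), (δ/2) • Matrix.single i i (1:ℝ))
              = (δ/2) • ((0 : EuclideanSpace ℝ (Fin d)), Matrix.single i i (1:ℝ)) := by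
            rw [Prod.smul_mk, smul_zero]
          rw [e, _root_.map_smul, smul_eq_mul]
        have h2 : g (0, (δ/2) • Matrix.single i i (1:ℝ)) ≤ 1 := by
          refine le_trans (hgle _) (hNbound _ ?_ ?_)
          · simp only [norm_zero]
            positivity
          · intro k l
            simp only [Matrix.smul_apply, Matrix.single, Matrix.of_apply, smul_eq_mul]
            split_ifs with h
            · rw [mul_one, abs_of_pos (by positivity)]
            · rw [mul_zero, abs_zero]
              positivity
        have h4 : g (0, Matrix.single i i 1) ≤ 2/δ := by
          rw [h3] at h2
          rw [le_div_iff₀ hδpos]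
          nlinarith
        have h5 : (Q i j)^2 ≤ 4/δ := by
          have : 2 * g (0, Matrix.single i i 1) ≤ 2 * (2/δ) := by linarith
          calc (Q i j)^2 ≤ 2 * g (0, Matrix.single i i 1) := h1
            _ ≤ 2 * (2/δ) := this
            _ = 4/δ := by ring
        have h6 : |Q i j| ≤ Real.sqrt (4/δ) := by
          rw [← Real.sqrt_sq_eq_abs]
          exact Real.sqrt_le_sqrt h5
        exact le_trans h6 (le_max_right _ _)
      · intro p' A' hA'
        rw [hrepr p' A' hA']
        exact le_trans (hgle _) (le_of_eq (hNsymm p' A' hA'))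
    have hval : (1 / 2) * Matrix.trace (A * (Q * Q.transpose)) + (inner ℝ p q : ℝ) = G p A := by
      rw [hrepr p A hA, hgeq, hNsymm p A hA]
    exact hb ⟨(q, Q), hmem, hval.symm⟩
end
end

section
/- Let (X, Y) be a G-distributed pair of d-dimensional random vectors on a sublinear expectation space (Ω, H, Ê). For φ ∈ C_{l.Lip}(ℝᵈ × ℝᵈ) define u(t, x, y) := Ê[φ(x + √t X, y + tY)] for (t, x, y) ∈ [0, ∞) × ℝᵈ × ℝᵈ. Then for all s, t ≥ 0 and x, y ∈ ℝᵈ the dynamic programming principle holds: u(t + s, x, y) = Ê[u(t, x + √s X, y + sY)]. -/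
noncomputable section

open Real Set

/-- The class `C_{l.Lip}`: locally Lipschitz functions with polynomial growth of the
Lipschitz constant. -/
def LocLip {V : Type*} [SeminormedAddGroup V] (φ : V → ℝ) : Prop :=
  ∃ C : ℝ, 0 < C ∧ ∃ m : ℕ, ∀ x y : V, |φ x - φ y| ≤ C * (1 + ‖x‖ ^ m + ‖y‖ ^ m) * ‖x - y‖

/-- A sublinear expectation space on a set `Ω`. -/
structure SublinExp (Ω : Type*) where
  H : Set (Ω → ℝ)
  E : (Ω → ℝ) → ℝ
  const_mem : ∀ c : ℝ, (fun _ => c) ∈ H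
  comp_mem : ∀ (n : ℕ) (X : Fin n → Ω → ℝ), (∀ i, X i ∈ H) →
    ∀ φ : (Fin n → ℝ) → ℝ, LocLip φ → (fun ω => φ (fun i => X i ω)) ∈ H
  mono : ∀ X ∈ H, ∀ Y ∈ H, (∀ ω, Y ω ≤ X ω) → E Y ≤ E X
  const_eq : ∀ c : ℝ, E (fun _ => c) = c
  subadd : ∀ X ∈ H, ∀ Y ∈ H, E X - E Y ≤ E (fun ω => X ω - Y ω)
  pos_hom : ∀ X ∈ H, ∀ l : ℝ, 0 ≤ l → E (fun ω => l * X ω) = l * E X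

/-- `X` is a random vector on the sublinear expectation space `S`. -/
def IsRV {Ω V : Type*} [SeminormedAddGroup V] (S : SublinExp Ω) (X : Ω → V) : Prop :=
  ∀ φ : V → ℝ, LocLip φ → (fun ω => φ (X ω)) ∈ S.H

/-- `X₁` (on `S₁`) and `X₂` (on `S₂`) are identically distributed. -/
def SameDistrib {Ω₁ Ω₂ V : Type*} [SeminormedAddGroup V]
    (S₁ : SublinExp Ω₁) (S₂ : SublinExp Ω₂) (X₁ : Ω₁ → V) (X₂ : Ω₂ → V) : Prop :=
  ∀ φ : V → ℝ, LocLip φ → S₁.E (fun ω => φ (X₁ ω)) = S₂.E (fun ω => φ (X₂ ω))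

/-- `Y` is independent to `X` under the sublinear expectation `S`. -/
def IndepTo {Ω U V : Type*} [SeminormedAddGroup U] [SeminormedAddGroup V]
    (S : SublinExp Ω) (Y : Ω → V) (X : Ω → U) : Prop :=
  ∀ φ : U × V → ℝ, LocLip φ →
    S.E (fun ω => φ (X ω, Y ω)) = S.E (fun ω => S.E (fun ω' => φ (X ω, Y ω')))

/-- `X'` is an independent copy of `X`. -/
def IsIndepCopy {Ω V : Type*} [SeminormedAddGroup V] (S : SublinExp Ω)
    (X X' : Ω → V) : Prop :=
  SameDistrib S S X X' ∧ IndepTo S X' X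

/-- The pair `(X, Y)` of `d`-dimensional random vectors is `G`-distributed. -/
def IsGDistributed {Ω : Type*} {d : ℕ} (S : SublinExp Ω)
    (X Y : Ω → EuclideanSpace ℝ (Fin d)) : Prop :=
  IsRV S (fun ω => (X ω, Y ω)) ∧
  ∃ Xb Yb : Ω → EuclideanSpace ℝ (Fin d),
    IsIndepCopy S (fun ω => (X ω, Y ω)) (fun ω => (Xb ω, Yb ω)) ∧
    ∀ a b : ℝ, 0 ≤ a → 0 ≤ b →
      SameDistrib S S
        (fun ω => (a • X ω + b • Xb ω, a ^ 2 • Y ω + b ^ 2 • Yb ω))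
        (fun ω => (Real.sqrt (a ^ 2 + b ^ 2) • X ω, (a ^ 2 + b ^ 2) • Y ω))

/-- The sublinear function `G(p, A) = Ê[½⟨AX, X⟩ + ⟨p, Y⟩]` generated by the pair `(X, Y)`. -/
def Gfun {Ω : Type*} {d : ℕ} (S : SublinExp Ω) (X Y : Ω → EuclideanSpace ℝ (Fin d))
    (p : EuclideanSpace ℝ (Fin d)) (A : Matrix (Fin d) (Fin d) ℝ) : ℝ :=
  S.E (fun ω => (1 / 2) * (inner ℝ (Matrix.toEuclideanLin A (X ω)) (X ω) : ℝ)
      + (inner ℝ p (Y ω) : ℝ))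

open Finset in
lemma aux_pow_sub_pow {a b : ℝ} (hb : 0 ≤ b) (hab : b ≤ a) (m : ℕ) :
    a ^ m - b ^ m ≤ (m + 1 : ℝ) * (1 + a ^ m + b ^ m) * (a - b) := by
  have ha : 0 ≤ a := hb.trans hab
  rw [← geom_sum₂_mul a b m]
  have hterm : ∀ i ∈ range m, a ^ i * b ^ (m - 1 - i) ≤ 1 + a ^ m + b ^ m := by
    intro i hi
    have hi' : i + (m - 1 - i) = m - 1 := by
      have := mem_range.mp hi; omega
    have h1 : a ^ i * b ^ (m - 1 - i) ≤ a ^ (m - 1) := by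
      calc a ^ i * b ^ (m - 1 - i) ≤ a ^ i * a ^ (m - 1 - i) := by
            gcongr
        _ = a ^ (m - 1) := by rw [← pow_add, hi']
    rcases le_total a 1 with h | h
    · have : a ^ (m - 1) ≤ 1 := pow_le_one₀ ha h
      nlinarith [pow_nonneg ha m, pow_nonneg hb m]
    · have : a ^ (m - 1) ≤ a ^ m := pow_le_pow_right₀ h (Nat.sub_le m 1)
      nlinarith [pow_nonneg hb m]
  have hsum : (∑ i ∈ range m, a ^ i * b ^ (m - 1 - i)) ≤ (m : ℝ) * (1 + a ^ m + b ^ m) := by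
    calc (∑ i ∈ range m, a ^ i * b ^ (m - 1 - i)) ≤ ∑ _i ∈ range m, (1 + a ^ m + b ^ m) :=
          Finset.sum_le_sum hterm
      _ = (m : ℝ) * (1 + a ^ m + b ^ m) := by
          rw [Finset.sum_const, card_range, nsmul_eq_mul]
  have hab' : 0 ≤ a - b := sub_nonneg.mpr hab
  have h1 : (0:ℝ) ≤ 1 + a ^ m + b ^ m := by positivity
  nlinarith

lemma aux_abs_pow_sub_pow {a b : ℝ} (ha : 0 ≤ a) (hb : 0 ≤ b) (m : ℕ) :
    |a ^ m - b ^ m| ≤ (m + 1 : ℝ) * (1 + a ^ m + b ^ m) * |a - b| := by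
  rcases le_total b a with h | h
  · rw [abs_of_nonneg (sub_nonneg.mpr (pow_le_pow_left₀ hb h m)),
      abs_of_nonneg (sub_nonneg.mpr h)]
    exact aux_pow_sub_pow hb h m
  · rw [abs_sub_comm (a ^ m), abs_sub_comm a b,
      abs_of_nonneg (sub_nonneg.mpr (pow_le_pow_left₀ ha h m)),
      abs_of_nonneg (sub_nonneg.mpr h)]
    have := aux_pow_sub_pow ha h m
    nlinarith

lemma aux_max_pow_le {x y : ℝ} (hx : 0 ≤ x) (hy : 0 ≤ y) (m : ℕ) :
    (max x y) ^ m ≤ x ^ m + y ^ m := by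
  rcases le_total x y with h | h
  · rw [max_eq_right h]; nlinarith [pow_nonneg hx m]
  · rw [max_eq_left h]; nlinarith [pow_nonneg hy m]

lemma aux_add_pow_le {x y : ℝ} (hx : 0 ≤ x) (hy : 0 ≤ y) (m : ℕ) :
    (x + y) ^ m ≤ 2 ^ m * (x ^ m + y ^ m) := by
  have h : x + y ≤ 2 * max x y := by
    rcases le_total x y with h | h
    · rw [max_eq_right h]; linarith
    · rw [max_eq_left h]; linarith
  calc (x + y) ^ m ≤ (2 * max x y) ^ m := pow_le_pow_left₀ (by positivity) h m
    _ = 2 ^ m * (max x y) ^ m := mul_pow 2 _ m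
    _ ≤ 2 ^ m * (x ^ m + y ^ m) := by
        have := aux_max_pow_le hx hy m
        have h2 : (0:ℝ) ≤ 2 ^ m := by positivity
        nlinarith

lemma locLip_norm_pow {V : Type*} [SeminormedAddGroup V] (m : ℕ) :
    LocLip (fun v : V => ‖v‖ ^ m) := by
  refine ⟨(m : ℝ) + 1, by positivity, m, fun x y => ?_⟩
  calc |‖x‖ ^ m - ‖y‖ ^ m| ≤ ((m : ℝ) + 1) * (1 + ‖x‖ ^ m + ‖y‖ ^ m) * |‖x‖ - ‖y‖| :=
        aux_abs_pow_sub_pow (norm_nonneg x) (norm_nonneg y) m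
    _ ≤ ((m : ℝ) + 1) * (1 + ‖x‖ ^ m + ‖y‖ ^ m) * ‖x - y‖ :=
        mul_le_mul_of_nonneg_left (by
          have h1 := norm_add_le (x - y) y
          have h2 := norm_add_le (-(x - y)) x
          rw [sub_add_cancel] at h1
          rw [neg_sub, sub_add_cancel, norm_sub_rev] at h2
          rw [abs_sub_le_iff]; constructor <;> linarith) (by positivity)

lemma locLip_const_add_mul {V : Type*} [SeminormedAddGroup V] {ψ : V → ℝ} (hψ : LocLip ψ)
    (c d : ℝ) (hd : 0 ≤ d) : LocLip (fun v => c + d * ψ v) := by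
  obtain ⟨C, hC, m, hl⟩ := hψ
  refine ⟨d * C + 1, by positivity, m, fun x y => ?_⟩
  have h1 : |(c + d * ψ x) - (c + d * ψ y)| = d * |ψ x - ψ y| := by
    rw [show (c + d * ψ x) - (c + d * ψ y) = d * (ψ x - ψ y) by ring, abs_mul,
      abs_of_nonneg hd]
  rw [h1]
  have h2 := hl x y
  have h3 : (0:ℝ) ≤ (1 + ‖x‖ ^ m + ‖y‖ ^ m) * ‖x - y‖ := by positivity
  nlinarith [abs_nonneg (ψ x - ψ y)]

lemma locLip_comp_affine {V W : Type*} [NormedAddCommGroup V] [NormedAddCommGroup W]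
    [NormedSpace ℝ V] [NormedSpace ℝ W] {φ : W → ℝ} (hφ : LocLip φ)
    (c : W) (L : V →L[ℝ] W) : LocLip (fun z => φ (c + L z)) := by
  obtain ⟨C, hC, m, hl⟩ := hφ
  set M : ℝ := ‖L‖ + 1 with hM
  have hM0 : (0:ℝ) < M := by positivity
  refine ⟨C * (2 ^ m * (1 + 2 * ‖c‖ ^ m + M ^ m)) * M, by positivity, m, fun z z' => ?_⟩
  have hnorm : ∀ w : V, ‖c + L w‖ ^ m ≤ 2 ^ m * (‖c‖ ^ m + M ^ m * ‖w‖ ^ m) := by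
    intro w
    have h1 : ‖c + L w‖ ≤ ‖c‖ + M * ‖w‖ := by
      have h2 := L.le_opNorm w
      have h3 := norm_add_le c (L w)
      nlinarith [norm_nonneg w]
    calc ‖c + L w‖ ^ m ≤ (‖c‖ + M * ‖w‖) ^ m := pow_le_pow_left₀ (norm_nonneg _) h1 m
      _ ≤ 2 ^ m * (‖c‖ ^ m + (M * ‖w‖) ^ m) :=
          aux_add_pow_le (norm_nonneg c) (by positivity) m
      _ = 2 ^ m * (‖c‖ ^ m + M ^ m * ‖w‖ ^ m) := by rw [mul_pow]
  have key : 1 + ‖c + L z‖ ^ m + ‖c + L z'‖ ^ m ≤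
      2 ^ m * (1 + 2 * ‖c‖ ^ m + M ^ m) * (1 + ‖z‖ ^ m + ‖z'‖ ^ m) := by
    have h1 := hnorm z
    have h2 := hnorm z'
    have hp : (1:ℝ) ≤ 2 ^ m := one_le_pow₀ (by norm_num)
    have hc : (0:ℝ) ≤ ‖c‖ ^ m := by positivity
    have hMm : (0:ℝ) ≤ M ^ m := by positivity
    have hz : (0:ℝ) ≤ ‖z‖ ^ m := by positivity
    have hz' : (0:ℝ) ≤ ‖z'‖ ^ m := by positivity
    nlinarith [mul_nonneg hc hz, mul_nonneg hc hz', mul_nonneg hMm hz, mul_nonneg hMm hz',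
      mul_le_mul_of_nonneg_left (add_nonneg hz hz') (le_trans zero_le_one hp)]
  have hdist : ‖(c + L z) - (c + L z')‖ ≤ M * ‖z - z'‖ := by
    have h1 : (c + L z) - (c + L z') = L (z - z') := by rw [map_sub]; abel
    rw [h1]
    have := L.le_opNorm (z - z')
    nlinarith [norm_nonneg (z - z')]
  calc |φ (c + L z) - φ (c + L z')|
      ≤ C * (1 + ‖c + L z‖ ^ m + ‖c + L z'‖ ^ m) * ‖(c + L z) - (c + L z')‖ := hl _ _
    _ ≤ C * (2 ^ m * (1 + 2 * ‖c‖ ^ m + M ^ m) * (1 + ‖z‖ ^ m + ‖z'‖ ^ m)) * (M * ‖z - z'‖) := by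
        gcongr
    _ = C * (2 ^ m * (1 + 2 * ‖c‖ ^ m + M ^ m)) * M * ((1 + ‖z‖ ^ m + ‖z'‖ ^ m) * ‖z - z'‖) := by ring
    _ = C * (2 ^ m * (1 + 2 * ‖c‖ ^ m + M ^ m)) * M * (1 + ‖z‖ ^ m + ‖z'‖ ^ m) * ‖z - z'‖ := by
        ring

section SublinLemmas

variable {Ω : Type*}

lemma sub_mem_H (S : SublinExp Ω) {f g : Ω → ℝ} (hf : f ∈ S.H) (hg : g ∈ S.H) :
    (fun ω => f ω - g ω) ∈ S.H := by
  have hl : LocLip (fun v : Fin 2 → ℝ => v 0 - v 1) := by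
    refine ⟨2, by norm_num, 0, fun x y => ?_⟩
    have h0 : |x 0 - y 0| ≤ ‖x - y‖ := by
      have := norm_le_pi_norm (x - y) 0
      simpa [Real.norm_eq_abs] using this
    have h1 : |x 1 - y 1| ≤ ‖x - y‖ := by
      have := norm_le_pi_norm (x - y) 1
      simpa [Real.norm_eq_abs] using this
    have : |x 0 - x 1 - (y 0 - y 1)| ≤ |x 0 - y 0| + |x 1 - y 1| := by
      have := abs_sub (x 0 - y 0) (x 1 - y 1)
      calc |x 0 - x 1 - (y 0 - y 1)| = |(x 0 - y 0) - (x 1 - y 1)| := by ring_nf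
        _ ≤ |x 0 - y 0| + |x 1 - y 1| := abs_sub _ _
    simp only [pow_zero]
    nlinarith [norm_nonneg (x - y)]
  have h := S.comp_mem 2 ![f, g] (by
    intro i; fin_cases i <;> simpa) (fun v => v 0 - v 1) hl
  simpa using h

lemma locLip_fix_fst {V W : Type*} [SeminormedAddGroup V] [SeminormedAddGroup W]
    {ψ : V × W → ℝ} (hψ : LocLip ψ) (z : V) : LocLip (fun w => ψ (z, w)) := by
  obtain ⟨C, hC, m, hl⟩ := hψ
  refine ⟨C * (1 + 2 * ‖z‖ ^ m), by positivity, m, fun w w' => ?_⟩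
  have hd : ‖((z, w) : V × W) - (z, w')‖ = ‖w - w'‖ := by
    show max ‖z - z‖ ‖w - w'‖ = ‖w - w'‖
    simp
  have h1 : ‖((z, w) : V × W)‖ ^ m ≤ ‖z‖ ^ m + ‖w‖ ^ m := by
    rw [Prod.norm_def]
    exact aux_max_pow_le (norm_nonneg _) (norm_nonneg _) m
  have h2 : ‖((z, w') : V × W)‖ ^ m ≤ ‖z‖ ^ m + ‖w'‖ ^ m := by
    rw [Prod.norm_def]
    exact aux_max_pow_le (norm_nonneg _) (norm_nonneg _) m
  have h := hl (z, w) (z, w')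
  rw [hd] at h
  calc |ψ (z, w) - ψ (z, w')| ≤ C * (1 + ‖((z, w) : V × W)‖ ^ m + ‖((z, w') : V × W)‖ ^ m) * ‖w - w'‖ := h
    _ ≤ C * (1 + (‖z‖ ^ m + ‖w‖ ^ m) + (‖z‖ ^ m + ‖w'‖ ^ m)) * ‖w - w'‖ := by gcongr
    _ ≤ C * (1 + 2 * ‖z‖ ^ m) * ((1 + ‖w‖ ^ m + ‖w'‖ ^ m) * ‖w - w'‖) := by
        have hz : (0:ℝ) ≤ ‖z‖ ^ m := by positivity
        have hw : (0:ℝ) ≤ ‖w‖ ^ m := by positivity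
        have hw' : (0:ℝ) ≤ ‖w'‖ ^ m := by positivity
        have hn : (0:ℝ) ≤ ‖w - w'‖ := norm_nonneg _
        nlinarith [mul_nonneg (mul_nonneg hC.le hz) (mul_nonneg hw hn),
          mul_nonneg (mul_nonneg hC.le hz) (mul_nonneg hw' hn), mul_nonneg hC.le (mul_nonneg hz hn)]
    _ = C * (1 + 2 * ‖z‖ ^ m) * (1 + ‖w‖ ^ m + ‖w'‖ ^ m) * ‖w - w'‖ := by ring

lemma locLip_E_param {V W : Type*} [NormedAddCommGroup V] [NormedAddCommGroup W]
    (S : SublinExp Ω) {Vr : Ω → W} (hV : IsRV S Vr) {ψ : V × W → ℝ} (hψ : LocLip ψ) :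
    LocLip (fun z : V => S.E (fun ω => ψ (z, Vr ω))) := by
  obtain ⟨C, hC, m, hl⟩ := hψ
  have hg : (fun ω => ‖Vr ω‖ ^ m) ∈ S.H := hV _ (locLip_norm_pow m)
  set K := S.E (fun ω => ‖Vr ω‖ ^ m) with hKdef
  have hK : 0 ≤ K := by
    have h := S.mono _ hg _ (S.const_mem 0) (fun ω => by positivity)
    rw [S.const_eq] at h
    exact h
  have main : ∀ z z' : V, S.E (fun ω => ψ (z, Vr ω)) - S.E (fun ω => ψ (z', Vr ω)) ≤
      C * (1 + 2 * K) * ((1 + ‖z‖ ^ m + ‖z'‖ ^ m) * ‖z - z'‖) := by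
    intro z z'
    have hmem : ∀ v : V, (fun ω => ψ (v, Vr ω)) ∈ S.H :=
      fun v => hV _ (locLip_fix_fst ⟨C, hC, m, hl⟩ v)
    set a' := C * (1 + ‖z‖ ^ m + ‖z'‖ ^ m) * ‖z - z'‖ with ha'
    set b' := 2 * C * ‖z - z'‖ with hb'def
    have hb' : 0 ≤ b' := by positivity
    have hbound_mem : (fun ω => a' + b' * ‖Vr ω‖ ^ m) ∈ S.H :=
      hV _ (locLip_const_add_mul (locLip_norm_pow m) a' b' hb')
    have hbg_mem : (fun ω => b' * ‖Vr ω‖ ^ m) ∈ S.H := by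
      have := hV _ (locLip_const_add_mul (locLip_norm_pow m) 0 b' hb')
      simpa using this
    have hdiff : (fun ω => ψ (z, Vr ω) - ψ (z', Vr ω)) ∈ S.H :=
      sub_mem_H S (hmem z) (hmem z')
    have hpt : ∀ ω, ψ (z, Vr ω) - ψ (z', Vr ω) ≤ a' + b' * ‖Vr ω‖ ^ m := by
      intro ω
      have h := hl (z, Vr ω) (z', Vr ω)
      have hd : ‖((z, Vr ω) : V × W) - (z', Vr ω)‖ = ‖z - z'‖ := by
        show max ‖z - z'‖ ‖Vr ω - Vr ω‖ = ‖z - z'‖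
        simp
      rw [hd] at h
      have h1 : ‖((z, Vr ω) : V × W)‖ ^ m ≤ ‖z‖ ^ m + ‖Vr ω‖ ^ m := by
        rw [Prod.norm_def]; exact aux_max_pow_le (norm_nonneg _) (norm_nonneg _) m
      have h2 : ‖((z', Vr ω) : V × W)‖ ^ m ≤ ‖z'‖ ^ m + ‖Vr ω‖ ^ m := by
        rw [Prod.norm_def]; exact aux_max_pow_le (norm_nonneg _) (norm_nonneg _) m
      calc ψ (z, Vr ω) - ψ (z', Vr ω) ≤ |ψ (z, Vr ω) - ψ (z', Vr ω)| := le_abs_self _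
        _ ≤ C * (1 + ‖((z, Vr ω) : V × W)‖ ^ m + ‖((z', Vr ω) : V × W)‖ ^ m) * ‖z - z'‖ := h
        _ ≤ C * (1 + (‖z‖ ^ m + ‖Vr ω‖ ^ m) + (‖z'‖ ^ m + ‖Vr ω‖ ^ m)) * ‖z - z'‖ := by gcongr
        _ = a' + b' * ‖Vr ω‖ ^ m := by rw [ha', hb'def]; ring
    have s1 : S.E (fun ω => ψ (z, Vr ω)) - S.E (fun ω => ψ (z', Vr ω)) ≤
        S.E (fun ω => ψ (z, Vr ω) - ψ (z', Vr ω)) := S.subadd _ (hmem z) _ (hmem z')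
    have s2 : S.E (fun ω => ψ (z, Vr ω) - ψ (z', Vr ω)) ≤
        S.E (fun ω => a' + b' * ‖Vr ω‖ ^ m) := S.mono _ hbound_mem _ hdiff hpt
    have s3 : S.E (fun ω => a' + b' * ‖Vr ω‖ ^ m) ≤ a' + b' * K := by
      have h4 := S.subadd _ hbound_mem _ hbg_mem
      have h5 : (fun ω => (a' + b' * ‖Vr ω‖ ^ m) - b' * ‖Vr ω‖ ^ m) = (fun _ : Ω => a') := by
        funext ω; ring
      rw [h5, S.const_eq] at h4
      have h6 : S.E (fun ω => b' * ‖Vr ω‖ ^ m) = b' * K := S.pos_hom _ hg b' hb'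
      linarith
    have s4 : a' + b' * K ≤ C * (1 + 2 * K) * ((1 + ‖z‖ ^ m + ‖z'‖ ^ m) * ‖z - z'‖) := by
      have hz : (0:ℝ) ≤ ‖z‖ ^ m := by positivity
      have hz' : (0:ℝ) ≤ ‖z'‖ ^ m := by positivity
      have hn : (0:ℝ) ≤ ‖z - z'‖ := norm_nonneg _
      rw [ha', hb'def]
      nlinarith [mul_nonneg (mul_nonneg (mul_nonneg hC.le hK) hn) (add_nonneg hz hz')]
    linarith
  refine ⟨C * (1 + 2 * K), by positivity, m, fun z z' => ?_⟩
  rw [abs_sub_le_iff]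
  constructor
  · have := main z z'
    linarith [this, le_of_eq (mul_assoc (C * (1 + 2 * K)) (1 + ‖z‖ ^ m + ‖z'‖ ^ m) ‖z - z'‖)]
  · have h := main z' z
    rw [norm_sub_rev z' z] at h
    calc S.E (fun ω => ψ (z', Vr ω)) - S.E (fun ω => ψ (z, Vr ω)) ≤
        C * (1 + 2 * K) * ((1 + ‖z'‖ ^ m + ‖z‖ ^ m) * ‖z - z'‖) := h
      _ = C * (1 + 2 * K) * (1 + ‖z‖ ^ m + ‖z'‖ ^ m) * ‖z - z'‖ := by ring

end SublinLemmas
def Lmap (d : ℕ) (t s : ℝ) :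
    ((EuclideanSpace ℝ (Fin d) × EuclideanSpace ℝ (Fin d)) ×
      (EuclideanSpace ℝ (Fin d) × EuclideanSpace ℝ (Fin d))) →L[ℝ]
      (EuclideanSpace ℝ (Fin d) × EuclideanSpace ℝ (Fin d)) :=
  (Real.sqrt s • ((ContinuousLinearMap.fst ℝ (EuclideanSpace ℝ (Fin d)) (EuclideanSpace ℝ (Fin d))).comp
      (ContinuousLinearMap.fst ℝ _ _)) +
    Real.sqrt t • ((ContinuousLinearMap.fst ℝ (EuclideanSpace ℝ (Fin d)) (EuclideanSpace ℝ (Fin d))).comp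
      (ContinuousLinearMap.snd ℝ _ _))).prod
  (s • ((ContinuousLinearMap.snd ℝ (EuclideanSpace ℝ (Fin d)) (EuclideanSpace ℝ (Fin d))).comp
      (ContinuousLinearMap.fst ℝ _ _)) +
    t • ((ContinuousLinearMap.snd ℝ (EuclideanSpace ℝ (Fin d)) (EuclideanSpace ℝ (Fin d))).comp
      (ContinuousLinearMap.snd ℝ _ _)))

def phiT {d : ℕ} (φ : EuclideanSpace ℝ (Fin d) × EuclideanSpace ℝ (Fin d) → ℝ)
    (x y : EuclideanSpace ℝ (Fin d)) (t s : ℝ) :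
    ((EuclideanSpace ℝ (Fin d) × EuclideanSpace ℝ (Fin d)) ×
      (EuclideanSpace ℝ (Fin d) × EuclideanSpace ℝ (Fin d))) → ℝ :=
  fun z => φ ((x, y) + Lmap d t s z)

lemma phiT_locLip {d : ℕ} {φ : EuclideanSpace ℝ (Fin d) × EuclideanSpace ℝ (Fin d) → ℝ}
    (hφ : LocLip φ) (x y : EuclideanSpace ℝ (Fin d)) (t s : ℝ) :
    LocLip (phiT φ x y t s) :=
  locLip_comp_affine hφ (x, y) (Lmap d t s)

lemma phiT_app {d : ℕ} (φ : EuclideanSpace ℝ (Fin d) × EuclideanSpace ℝ (Fin d) → ℝ)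
    (x y : EuclideanSpace ℝ (Fin d)) (t s : ℝ) (p q r w : EuclideanSpace ℝ (Fin d)) :
    phiT φ x y t s ((p, q), (r, w)) =
      φ (x + (Real.sqrt s • p + Real.sqrt t • r), y + (s • q + t • w)) := by
  simp only [phiT, Lmap, ContinuousLinearMap.prod_apply, ContinuousLinearMap.add_apply,
    ContinuousLinearMap.coe_smul', Pi.smul_apply, ContinuousLinearMap.comp_apply,
    ContinuousLinearMap.coe_fst', ContinuousLinearMap.coe_snd', Prod.mk_add_mk]

/-- Dynamic programming principle for `u(t,x,y) = Ê[φ(x + √t X, y + t Y)]` when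
`(X, Y)` is `G`-distributed. -/
theorem stmt_6 {Ω : Type*} {d : ℕ} (S : SublinExp Ω)
    (X Y : Ω → EuclideanSpace ℝ (Fin d)) (hG : IsGDistributed S X Y)
    (φ : EuclideanSpace ℝ (Fin d) × EuclideanSpace ℝ (Fin d) → ℝ) (hφ : LocLip φ)
    (u : ℝ → EuclideanSpace ℝ (Fin d) → EuclideanSpace ℝ (Fin d) → ℝ)
    (hu : ∀ t x y, u t x y =
      S.E (fun ω => φ (x + Real.sqrt t • X ω, y + t • Y ω))) :
    ∀ t s : ℝ, 0 ≤ t → 0 ≤ s → ∀ x y,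
      u (t + s) x y = S.E (fun ω => u t (x + Real.sqrt s • X ω) (y + s • Y ω)) := by
  obtain ⟨hXY, Xb, Yb, ⟨hsame, hindep⟩, hscale⟩ := hG
  intro t s ht hs x y
  have hφt : LocLip (phiT φ x y t s) := phiT_locLip hφ x y t s
  have hψ : LocLip (fun v : EuclideanSpace ℝ (Fin d) × EuclideanSpace ℝ (Fin d) =>
      φ ((x, y) + v)) :=
    locLip_comp_affine hφ (x, y) (ContinuousLinearMap.id ℝ _)
  have hsc := hscale (Real.sqrt s) (Real.sqrt t) (Real.sqrt_nonneg s) (Real.sqrt_nonneg t)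
    (fun v => φ ((x, y) + v)) hψ
  rw [Real.sq_sqrt ht, Real.sq_sqrt hs, add_comm s t] at hsc
  have hind := hindep (phiT φ x y t s) hφt
  calc u (t + s) x y
      = S.E (fun ω => φ ((x, y) + (Real.sqrt (t + s) • X ω, (t + s) • Y ω))) := hu _ _ _
    _ = S.E (fun ω => φ ((x, y) + (Real.sqrt s • X ω + Real.sqrt t • Xb ω,
          s • Y ω + t • Yb ω))) := hsc.symm
    _ = S.E (fun ω => phiT φ x y t s ((X ω, Y ω), (Xb ω, Yb ω))) := by
        refine congrArg S.E (funext fun ω => ?_)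
        rw [phiT_app, Prod.mk_add_mk]
    _ = S.E (fun ω => S.E (fun ω' => phiT φ x y t s ((X ω, Y ω), (Xb ω', Yb ω')))) := hind
    _ = S.E (fun ω => u t (x + Real.sqrt s • X ω) (y + s • Y ω)) := by
        refine congrArg S.E (funext fun ω => ?_)
        have hcopy := (hsame (fun w => phiT φ x y t s ((X ω, Y ω), w))
          (locLip_fix_fst hφt (X ω, Y ω))).symm
        refine hcopy.trans ?_
        rw [hu]
        refine congrArg S.E (funext fun ω' => ?_)
        rw [phiT_app]
        refine congrArg φ (Prod.ext ?_ ?_)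
        · show x + (Real.sqrt s • X ω + Real.sqrt t • X ω')
            = x + Real.sqrt s • X ω + Real.sqrt t • X ω'
          abel
        · show y + (s • Y ω + t • Y ω') = y + s • Y ω + t • Y ω'
          abel
end
end

section
/- Let (X, Y) be a G-distributed pair of d-dimensional random vectors on a sublinear expectation space (Ω, H, Ê), let φ ∈ C_{l.Lip}(ℝᵈ × ℝᵈ), and define u(t, x, y) := Ê[φ(x + √t X, y + tY)]. Then for each T > 0 there exist constants C, k > 0 such that for all t, s ∈ [0, T] with t + s ∈ [0, T] and all x, y, x̄, ȳ ∈ ℝᵈ: |u(t, x, y) − u(t, x̄, ȳ)| ≤ C(1 + |x|^k + |y|^k + |x̄|^k + |ȳ|^k)(|x − x̄| + |y − ȳ|), and |u(t, x, y) − u(t + s, x, y)| ≤ C(1 + |x|^k + |y|^k)(s + s^{1/2}). -/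
noncomputable section

open Real Set

section Helpers

/-- `c^m ≤ 1 + a^m + b^m` where `c = max 1 (max a b)`. -/
lemma max3_pow_le (m : ℕ) {a b : ℝ} (ha : 0 ≤ a) (hb : 0 ≤ b) :
    (max 1 (max a b)) ^ m ≤ 1 + a ^ m + b ^ m := by
  have hpa : 0 ≤ a ^ m := pow_nonneg ha m
  have hpb : 0 ≤ b ^ m := pow_nonneg hb m
  rcases max_cases 1 (max a b) with ⟨h1, _⟩ | ⟨h1, _⟩
  · rw [h1]; simp; linarith
  · rw [h1]
    rcases max_cases a b with ⟨h2, _⟩ | ⟨h2, _⟩ <;> rw [h2] <;> linarith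

lemma tri3 (m : ℕ) {a b : ℝ} (ha : 0 ≤ a) (hb : 0 ≤ b) :
    (1 + a + b) ^ m ≤ 3 ^ m * (1 + a ^ m + b ^ m) := by
  have hc : (0:ℝ) ≤ max 1 (max a b) := le_trans zero_le_one (le_max_left _ _)
  have h1 : 1 + a + b ≤ 3 * max 1 (max a b) := by
    have g1 : (1:ℝ) ≤ max 1 (max a b) := le_max_left _ _
    have g2 : a ≤ max 1 (max a b) := le_trans (le_max_left a b) (le_max_right _ _)
    have g3 : b ≤ max 1 (max a b) := le_trans (le_max_right a b) (le_max_right _ _)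
    linarith
  calc (1 + a + b) ^ m ≤ (3 * max 1 (max a b)) ^ m :=
        pow_le_pow_left₀ (by linarith) h1 m
    _ = 3 ^ m * (max 1 (max a b)) ^ m := mul_pow 3 _ m
    _ ≤ 3 ^ m * (1 + a ^ m + b ^ m) := by
        have := max3_pow_le m ha hb
        have h3 : (0:ℝ) ≤ 3 ^ m := by positivity
        nlinarith

lemma pow_le_one_add_pow {a : ℝ} (ha : 0 ≤ a) {m k : ℕ} (hmk : m ≤ k) :
    a ^ m ≤ 1 + a ^ k := by
  rcases le_total a 1 with h | h
  · have : a ^ m ≤ 1 := pow_le_one₀ ha h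
    have : (0:ℝ) ≤ a ^ k := pow_nonneg ha k
    linarith
  · have : a ^ m ≤ a ^ k := pow_le_pow_right₀ h hmk
    have : (0:ℝ) ≤ a ^ k := pow_nonneg ha k
    linarith

lemma locLip_const {V : Type*} [SeminormedAddGroup V] (c : ℝ) :
    LocLip (fun _ : V => c) := by
  refine ⟨1, one_pos, 0, fun x y => ?_⟩
  simp only [sub_self, abs_zero]
  positivity

lemma LocLip.neg {V : Type*} [SeminormedAddGroup V] {f : V → ℝ} (hf : LocLip f) :
    LocLip (fun v => -f v) := by
  obtain ⟨C, hC, m, h⟩ := hf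
  exact ⟨C, hC, m, fun x y => by
    rw [show -f x - -f y = -(f x - f y) by ring, abs_neg]; exact h x y⟩

lemma LocLip.sub {V : Type*} [SeminormedAddGroup V] {f g : V → ℝ}
    (hf : LocLip f) (hg : LocLip g) : LocLip (fun v => f v - g v) := by
  obtain ⟨C₁, hC₁, m₁, h₁⟩ := hf
  obtain ⟨C₂, hC₂, m₂, h₂⟩ := hg
  refine ⟨3 * (C₁ + C₂), by linarith, m₁ + m₂, fun x y => ?_⟩
  have e1 := h₁ x y
  have e2 := h₂ x y
  have hx := norm_nonneg x
  have hy := norm_nonneg y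
  have hxy := norm_nonneg (x - y)
  have b1 : ‖x‖ ^ m₁ ≤ 1 + ‖x‖ ^ (m₁ + m₂) := pow_le_one_add_pow hx (Nat.le_add_right _ _)
  have b2 : ‖y‖ ^ m₁ ≤ 1 + ‖y‖ ^ (m₁ + m₂) := pow_le_one_add_pow hy (Nat.le_add_right _ _)
  have b3 : ‖x‖ ^ m₂ ≤ 1 + ‖x‖ ^ (m₁ + m₂) := pow_le_one_add_pow hx (Nat.le_add_left _ _)
  have b4 : ‖y‖ ^ m₂ ≤ 1 + ‖y‖ ^ (m₁ + m₂) := pow_le_one_add_pow hy (Nat.le_add_left _ _)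
  have hxk : (0:ℝ) ≤ ‖x‖ ^ (m₁ + m₂) := by positivity
  have hyk : (0:ℝ) ≤ ‖y‖ ^ (m₁ + m₂) := by positivity
  calc |f x - g x - (f y - g y)| ≤ |f x - f y| + |g x - g y| := by
        rw [show f x - g x - (f y - g y) = (f x - f y) - (g x - g y) by ring]
        exact abs_sub _ _
    _ ≤ C₁ * (1 + ‖x‖ ^ m₁ + ‖y‖ ^ m₁) * ‖x - y‖ + C₂ * (1 + ‖x‖ ^ m₂ + ‖y‖ ^ m₂) * ‖x - y‖ := by
        linarith
    _ ≤ C₁ * (3 * (1 + ‖x‖ ^ (m₁ + m₂) + ‖y‖ ^ (m₁ + m₂))) * ‖x - y‖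
        + C₂ * (3 * (1 + ‖x‖ ^ (m₁ + m₂) + ‖y‖ ^ (m₁ + m₂))) * ‖x - y‖ := by
        have q1 : 1 + ‖x‖ ^ m₁ + ‖y‖ ^ m₁ ≤ 3 * (1 + ‖x‖ ^ (m₁ + m₂) + ‖y‖ ^ (m₁ + m₂)) := by
          linarith
        have q2 : 1 + ‖x‖ ^ m₂ + ‖y‖ ^ m₂ ≤ 3 * (1 + ‖x‖ ^ (m₁ + m₂) + ‖y‖ ^ (m₁ + m₂)) := by
          linarith
        have r1 := mul_le_mul_of_nonneg_right
          (mul_le_mul_of_nonneg_left q1 (le_of_lt hC₁)) hxy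
        have r2 := mul_le_mul_of_nonneg_right
          (mul_le_mul_of_nonneg_left q2 (le_of_lt hC₂)) hxy
        linarith
    _ = 3 * (C₁ + C₂) * (1 + ‖x‖ ^ (m₁ + m₂) + ‖y‖ ^ (m₁ + m₂)) * ‖x - y‖ := by ring

lemma locLip_const_mul {V : Type*} [SeminormedAddGroup V] {f : V → ℝ}
    (hf : LocLip f) (c : ℝ) : LocLip (fun v => c * f v) := by
  obtain ⟨C, hC, m, h⟩ := hf
  refine ⟨|c| * C + 1, by positivity, m, fun x y => ?_⟩
  have := h x y
  have h0 : |c * f x - c * f y| = |c| * |f x - f y| := by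
    rw [← abs_mul]; ring_nf
  have hc : 0 ≤ |c| := abs_nonneg c
  have h1 : (0:ℝ) ≤ (1 + ‖x‖ ^ m + ‖y‖ ^ m) * ‖x - y‖ := by positivity
  rw [h0]
  nlinarith [abs_nonneg (f x - f y)]

/-- `|a^j - b^j| ≤ j * (max a b)^j * |a - b|` for `1 ≤ a, b`. -/
lemma abs_pow_sub_pow_le' (j : ℕ) : ∀ {a b : ℝ}, 1 ≤ a → 1 ≤ b →
    |a ^ j - b ^ j| ≤ j * (max a b) ^ j * |a - b| := by
  induction j with
  | zero => intro a b _ _; simp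
  | succ n ih =>
    intro a b ha hb
    have hM : 1 ≤ max a b := le_trans ha (le_max_left _ _)
    have hM0 : (0:ℝ) ≤ max a b := by linarith
    have hMn : (0:ℝ) ≤ (max a b) ^ n := by positivity
    have hMn1 : (max a b) ^ n ≤ (max a b) ^ (n+1) := by
      calc (max a b) ^ n = 1 * (max a b) ^ n := (one_mul _).symm
        _ ≤ (max a b) * (max a b) ^ n := by nlinarith
        _ = (max a b) ^ (n+1) := by ring
    have key : a ^ (n+1) - b ^ (n+1) = a * (a ^ n - b ^ n) + b ^ n * (a - b) := by ring
    have h1 : |a ^ (n+1) - b ^ (n+1)| ≤ a * |a ^ n - b ^ n| + b ^ n * |a - b| := by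
      rw [key]
      calc |a * (a ^ n - b ^ n) + b ^ n * (a - b)|
          ≤ |a * (a ^ n - b ^ n)| + |b ^ n * (a - b)| := abs_add_le _ _
        _ = a * |a ^ n - b ^ n| + b ^ n * |a - b| := by
            rw [abs_mul, abs_mul, abs_of_nonneg (by linarith : (0:ℝ) ≤ a),
              abs_of_nonneg (by positivity : (0:ℝ) ≤ b ^ n)]
    have h2 := ih ha hb
    have haM : a ≤ max a b := le_max_left _ _
    have hbM : b ^ n ≤ (max a b) ^ n := pow_le_pow_left₀ (by linarith) (le_max_right _ _) n
    have habs : (0:ℝ) ≤ |a - b| := abs_nonneg _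
    have habs2 : (0:ℝ) ≤ |a ^ n - b ^ n| := abs_nonneg _
    calc |a ^ (n+1) - b ^ (n+1)| ≤ a * |a ^ n - b ^ n| + b ^ n * |a - b| := h1
      _ ≤ a * (n * (max a b) ^ n * |a - b|) + (max a b) ^ n * |a - b| := by nlinarith
      _ ≤ (max a b) * (n * (max a b) ^ n * |a - b|) + (max a b) ^ (n+1) * |a - b| := by
          nlinarith
      _ = ((n : ℝ) + 1) * (max a b) ^ (n+1) * |a - b| := by ring
      _ = ((n+1 : ℕ) : ℝ) * (max a b) ^ (n+1) * |a - b| := by push_cast; ring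

lemma locLip_pow_norm {V : Type*} [SeminormedAddGroup V] (j : ℕ) :
    LocLip (fun v : V => (1 + ‖v‖) ^ j) := by
  refine ⟨j * 3 ^ j + 1, by positivity, j, fun x y => ?_⟩
  have hx : (1:ℝ) ≤ 1 + ‖x‖ := by have := norm_nonneg x; linarith
  have hy : (1:ℝ) ≤ 1 + ‖y‖ := by have := norm_nonneg y; linarith
  have h1 := abs_pow_sub_pow_le' j hx hy
  have hmax : max (1 + ‖x‖) (1 + ‖y‖) ≤ 1 + ‖x‖ + ‖y‖ := by
    rcases max_cases (1 + ‖x‖) (1 + ‖y‖) with ⟨h, _⟩ | ⟨h, _⟩ <;> rw [h] <;>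
      [have := norm_nonneg y; have := norm_nonneg x] <;> linarith
  have h2 : (max (1 + ‖x‖) (1 + ‖y‖)) ^ j ≤ 3 ^ j * (1 + ‖x‖ ^ j + ‖y‖ ^ j) := by
    calc (max (1 + ‖x‖) (1 + ‖y‖)) ^ j ≤ (1 + ‖x‖ + ‖y‖) ^ j :=
          pow_le_pow_left₀ (by positivity) hmax j
      _ ≤ 3 ^ j * (1 + ‖x‖ ^ j + ‖y‖ ^ j) := tri3 j (norm_nonneg x) (norm_nonneg y)
  have h3 : |(1 + ‖x‖) - (1 + ‖y‖)| ≤ ‖x - y‖ := by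
    have e1 := norm_le_norm_add_norm_sub' x y
    have e2 := norm_le_norm_add_norm_sub' y x
    rw [norm_sub_rev y x] at e2
    rw [abs_le]; constructor <;> linarith
  have hj : (0:ℝ) ≤ (j:ℝ) := Nat.cast_nonneg j
  have hs : (0:ℝ) ≤ 1 + ‖x‖ ^ j + ‖y‖ ^ j := by positivity
  have habs : (0:ℝ) ≤ |(1 + ‖x‖) - (1 + ‖y‖)| := abs_nonneg _
  have hnm : (0:ℝ) ≤ ‖x - y‖ := norm_nonneg _
  calc |(1 + ‖x‖) ^ j - (1 + ‖y‖) ^ j|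
      ≤ j * (max (1 + ‖x‖) (1 + ‖y‖)) ^ j * |(1 + ‖x‖) - (1 + ‖y‖)| := h1
    _ ≤ j * (3 ^ j * (1 + ‖x‖ ^ j + ‖y‖ ^ j)) * ‖x - y‖ := by
        apply mul_le_mul
        · exact mul_le_mul_of_nonneg_left h2 hj
        · exact h3
        · exact habs
        · positivity
    _ ≤ (j * 3 ^ j + 1) * (1 + ‖x‖ ^ j + ‖y‖ ^ j) * ‖x - y‖ := by
        have : (j : ℝ) * 3 ^ j ≤ (j : ℝ) * 3 ^ j + 1 := by linarith
        have h5 : (0:ℝ) ≤ (1 + ‖x‖ ^ j + ‖y‖ ^ j) * ‖x - y‖ := by positivity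
        calc (j : ℝ) * (3 ^ j * (1 + ‖x‖ ^ j + ‖y‖ ^ j)) * ‖x - y‖
            = ((j:ℝ) * 3 ^ j) * ((1 + ‖x‖ ^ j + ‖y‖ ^ j) * ‖x - y‖) := by ring
          _ ≤ ((j:ℝ) * 3 ^ j + 1) * ((1 + ‖x‖ ^ j + ‖y‖ ^ j) * ‖x - y‖) :=
              mul_le_mul_of_nonneg_right this h5
          _ = ((j:ℝ) * 3 ^ j + 1) * (1 + ‖x‖ ^ j + ‖y‖ ^ j) * ‖x - y‖ := by ring

/-- Composition of a `LocLip` function with an affine-type map. -/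
lemma locLip_comp_affine_s7 {V W : Type*} [SeminormedAddGroup V] [SeminormedAddGroup W]
    {φ : W → ℝ} (hφ : LocLip φ) (A : V → W) (K L : ℝ) (hK : 1 ≤ K) (hL : 0 ≤ L)
    (hA1 : ∀ v w, ‖A v - A w‖ ≤ L * ‖v - w‖) (hA2 : ∀ v, ‖A v‖ ≤ K * (1 + ‖v‖)) :
    LocLip (fun v => φ (A v)) := by
  obtain ⟨C, hC, m, h⟩ := hφ
  refine ⟨3 * 3 ^ m * C * K ^ m * L + 1, by positivity, m, fun x y => ?_⟩
  have hx := norm_nonneg x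
  have hy := norm_nonneg y
  have e := h (A x) (A y)
  have b1 : ‖A x‖ ^ m ≤ K ^ m * (1 + ‖x‖) ^ m := by
    calc ‖A x‖ ^ m ≤ (K * (1 + ‖x‖)) ^ m := pow_le_pow_left₀ (norm_nonneg _) (hA2 x) m
      _ = K ^ m * (1 + ‖x‖) ^ m := mul_pow _ _ _
  have b2 : ‖A y‖ ^ m ≤ K ^ m * (1 + ‖y‖) ^ m := by
    calc ‖A y‖ ^ m ≤ (K * (1 + ‖y‖)) ^ m := pow_le_pow_left₀ (norm_nonneg _) (hA2 y) m
      _ = K ^ m * (1 + ‖y‖) ^ m := mul_pow _ _ _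
  have c1 : (1 + ‖x‖) ^ m ≤ (1 + ‖x‖ + ‖y‖) ^ m :=
    pow_le_pow_left₀ (by linarith) (by linarith) m
  have c2 : (1 + ‖y‖) ^ m ≤ (1 + ‖x‖ + ‖y‖) ^ m :=
    pow_le_pow_left₀ (by linarith) (by linarith) m
  have c3 : (1 + ‖x‖ + ‖y‖) ^ m ≤ 3 ^ m * (1 + ‖x‖ ^ m + ‖y‖ ^ m) := tri3 m hx hy
  have hKm : (1:ℝ) ≤ K ^ m := one_le_pow₀ hK
  have hsum : (0:ℝ) ≤ 1 + ‖x‖ ^ m + ‖y‖ ^ m := by positivity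
  have h3m : (0:ℝ) ≤ 3 ^ m := by positivity
  have bound : 1 + ‖A x‖ ^ m + ‖A y‖ ^ m ≤ 3 * K ^ m * (3 ^ m * (1 + ‖x‖ ^ m + ‖y‖ ^ m)) := by
    have t0 : (1:ℝ) ≤ 3 ^ m * (1 + ‖x‖ ^ m + ‖y‖ ^ m) := by
      have : (1:ℝ) ≤ 1 + ‖x‖ ^ m + ‖y‖ ^ m := by
        have := pow_nonneg hx m; have := pow_nonneg hy m; linarith
      calc (1:ℝ) = 1 * 1 := (one_mul 1).symm
        _ ≤ 3 ^ m * (1 + ‖x‖ ^ m + ‖y‖ ^ m) := by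
            apply mul_le_mul (one_le_pow₀ (by norm_num)) this zero_le_one (by positivity)
    nlinarith [pow_nonneg (norm_nonneg (A x)) m, pow_nonneg (norm_nonneg (A y)) m,
      pow_nonneg (le_trans zero_le_one hKm) m]
  have lip := hA1 x y
  have hnm : (0:ℝ) ≤ ‖x - y‖ := norm_nonneg _
  have hAxy : (0:ℝ) ≤ ‖A x - A y‖ := norm_nonneg _
  calc |φ (A x) - φ (A y)| ≤ C * (1 + ‖A x‖ ^ m + ‖A y‖ ^ m) * ‖A x - A y‖ := e
    _ ≤ C * (3 * K ^ m * (3 ^ m * (1 + ‖x‖ ^ m + ‖y‖ ^ m))) * (L * ‖x - y‖) := by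
        apply mul_le_mul
        · apply mul_le_mul_of_nonneg_left bound (le_of_lt hC)
        · exact lip
        · exact hAxy
        · exact mul_nonneg (le_of_lt hC)
            (mul_nonneg (mul_nonneg (by norm_num) (pow_nonneg (by linarith) m))
              (by positivity))
    _ = 3 * 3 ^ m * C * K ^ m * L * (1 + ‖x‖ ^ m + ‖y‖ ^ m) * ‖x - y‖ := by ring
    _ ≤ (3 * 3 ^ m * C * K ^ m * L + 1) * (1 + ‖x‖ ^ m + ‖y‖ ^ m) * ‖x - y‖ := by
        nlinarith

end Helpers
section Exp

variable {Ω : Type*} (S : SublinExp Ω) {W : Type*} [SeminormedAddGroup W]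
  {V : Ω → W}

lemma E_abs_sub_le (hV : IsRV S V) {f g z : W → ℝ} (hf : LocLip f) (hg : LocLip g) (hz : LocLip z)
    (hb : ∀ v, |f v - g v| ≤ z v) :
    |S.E (fun ω => f (V ω)) - S.E (fun ω => g (V ω))| ≤ S.E (fun ω => z (V ω)) := by
  have hfH := hV f hf
  have hgH := hV g hg
  have hzH := hV z hz
  have hfgH := hV _ (hf.sub hg)
  have hgfH := hV _ (hg.sub hf)
  have d1 : S.E (fun ω => f (V ω)) - S.E (fun ω => g (V ω)) ≤
      S.E (fun ω => f (V ω) - g (V ω)) := S.subadd _ hfH _ hgH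
  have d2 : S.E (fun ω => g (V ω)) - S.E (fun ω => f (V ω)) ≤
      S.E (fun ω => g (V ω) - f (V ω)) := S.subadd _ hgH _ hfH
  have m1 : S.E (fun ω => f (V ω) - g (V ω)) ≤ S.E (fun ω => z (V ω)) :=
    S.mono _ hzH _ hfgH (fun ω => le_trans (le_abs_self _) (hb (V ω)))
  have m2 : S.E (fun ω => g (V ω) - f (V ω)) ≤ S.E (fun ω => z (V ω)) :=
    S.mono _ hzH _ hgfH (fun ω => by
      have := hb (V ω)
      have := neg_abs_le (f (V ω) - g (V ω))
      linarith)
  rw [abs_le]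
  constructor <;> linarith

lemma E_le_mul_moment (hV : IsRV S V) {z : W → ℝ} (hz : LocLip z) {c : ℝ} (hc : 0 ≤ c) (j : ℕ)
    (hb : ∀ v, z v ≤ c * (1 + ‖v‖) ^ j) :
    S.E (fun ω => z (V ω)) ≤ c * S.E (fun ω => (1 + ‖V ω‖) ^ j) := by
  have hp := hV _ (locLip_pow_norm (V := W) j)
  have hcp := hV _ (locLip_const_mul (locLip_pow_norm (V := W) j) c)
  have h1 : S.E (fun ω => z (V ω)) ≤ S.E (fun ω => c * (1 + ‖V ω‖) ^ j) :=
    S.mono _ hcp _ (hV z hz) (fun ω => hb (V ω))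
  have h2 : S.E (fun ω => c * (1 + ‖V ω‖) ^ j) = c * S.E (fun ω => (1 + ‖V ω‖) ^ j) :=
    S.pos_hom _ hp c hc
  linarith

lemma one_le_moment (hV : IsRV S V) (j : ℕ) : 1 ≤ S.E (fun ω => (1 + ‖V ω‖) ^ j) := by
  have h := S.mono _ (hV _ (locLip_pow_norm (V := W) j)) _ (S.const_mem 1)
    (fun ω => one_le_pow₀ (by have := norm_nonneg (V ω); linarith))
  rw [S.const_eq 1] at h
  exact h

lemma moment_mono (hV : IsRV S V) {i j : ℕ} (hij : i ≤ j) :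
    S.E (fun ω => (1 + ‖V ω‖) ^ i) ≤ S.E (fun ω => (1 + ‖V ω‖) ^ j) :=
  S.mono _ (hV _ (locLip_pow_norm (V := W) j)) _ (hV _ (locLip_pow_norm (V := W) i))
    (fun ω => pow_le_pow_right₀ (by have := norm_nonneg (V ω); linarith) hij)

end Exp
section Affine

variable {E F : Type*} [NormedAddCommGroup E] [NormedSpace ℝ E]
  [NormedAddCommGroup F] [NormedSpace ℝ F]

lemma aff_bound {P Q N aa L : ℝ} (hp : 0 ≤ P) (hq : 0 ≤ Q) (hn : 0 ≤ N)
    (ha : 0 ≤ aa) (haL : aa ≤ L) (hL : 1 ≤ L) :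
    P + aa * N ≤ (1 + P + Q) * L * (1 + N) := by
  have hL0 : (0:ℝ) ≤ L := by linarith
  nlinarith [mul_le_mul_of_nonneg_right haL hn, mul_nonneg hp (by linarith : (0:ℝ) ≤ L - 1),
    mul_nonneg hq hL0, mul_nonneg (mul_nonneg hp hL0) hn, mul_nonneg (mul_nonneg hq hL0) hn]

lemma aff_bound3 {P Q N M aa cc L : ℝ} (hp : 0 ≤ P) (hq : 0 ≤ Q) (hn : 0 ≤ N) (hm : 0 ≤ M)
    (ha : 0 ≤ aa) (hcc : 0 ≤ cc) (haL : aa ≤ L) (hcL : cc ≤ L) (hL : 1 ≤ L) :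
    P + aa * N + cc * M ≤ (1 + P + Q) * L * ((1 + N) * (1 + M)) := by
  have hL0 : (0:ℝ) ≤ L := by linarith
  nlinarith [mul_le_mul_of_nonneg_right haL hn, mul_le_mul_of_nonneg_right hcL hm,
    mul_nonneg hp (by linarith : (0:ℝ) ≤ L - 1), mul_nonneg hq hL0,
    mul_nonneg (mul_nonneg hp hL0) hn, mul_nonneg (mul_nonneg hq hL0) hn,
    mul_nonneg (mul_nonneg hp hL0) hm, mul_nonneg (mul_nonneg hq hL0) hm,
    mul_nonneg (mul_nonneg hL0 hn) hm, mul_nonneg (mul_nonneg (mul_nonneg hp hL0) hn) hm,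
    mul_nonneg (mul_nonneg (mul_nonneg hq hL0) hn) hm]

lemma norm_affine_pair_le (p : E) (q : F) {a b L : ℝ} (ha : 0 ≤ a) (hb : 0 ≤ b)
    (haL : a ≤ L) (hbL : b ≤ L) (hL : 1 ≤ L) (v : E × F) :
    ‖(p + a • v.1, q + b • v.2)‖ ≤ (1 + ‖p‖ + ‖q‖) * L * (1 + ‖v‖) := by
  have hv1 : ‖v.1‖ ≤ ‖v‖ := norm_fst_le v
  have hv2 : ‖v.2‖ ≤ ‖v‖ := norm_snd_le v
  have hv : 0 ≤ ‖v‖ := norm_nonneg v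
  have hp : 0 ≤ ‖p‖ := norm_nonneg p
  have hq : 0 ≤ ‖q‖ := norm_nonneg q
  have h1 : ‖p + a • v.1‖ ≤ ‖p‖ + a * ‖v‖ := by
    calc ‖p + a • v.1‖ ≤ ‖p‖ + ‖a • v.1‖ := norm_add_le _ _
      _ = ‖p‖ + |a| * ‖v.1‖ := by rw [norm_smul, Real.norm_eq_abs]
      _ ≤ ‖p‖ + a * ‖v‖ := by
          rw [abs_of_nonneg ha]
          have := mul_le_mul_of_nonneg_left hv1 ha
          linarith
  have h2 : ‖q + b • v.2‖ ≤ ‖q‖ + b * ‖v‖ := by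
    calc ‖q + b • v.2‖ ≤ ‖q‖ + ‖b • v.2‖ := norm_add_le _ _
      _ = ‖q‖ + |b| * ‖v.2‖ := by rw [norm_smul, Real.norm_eq_abs]
      _ ≤ ‖q‖ + b * ‖v‖ := by
          rw [abs_of_nonneg hb]
          have := mul_le_mul_of_nonneg_left hv2 hb
          linarith
  rw [Prod.norm_def]
  apply max_le
  · calc ‖p + a • v.1‖ ≤ ‖p‖ + a * ‖v‖ := h1
      _ ≤ (1 + ‖p‖ + ‖q‖) * L * (1 + ‖v‖) := by
          have := aff_bound hp hq hv ha haL hL; linarith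
  · calc ‖q + b • v.2‖ ≤ ‖q‖ + b * ‖v‖ := h2
      _ ≤ (1 + ‖p‖ + ‖q‖) * L * (1 + ‖v‖) := by
          have h3 : ‖q‖ + b * ‖v‖ ≤ (1 + ‖q‖ + ‖p‖) * L * (1 + ‖v‖) :=
            aff_bound hq hp hv hb hbL hL
          nlinarith

lemma norm_affine_triple_le (p : E) (q : F) {a b c e L : ℝ}
    (ha : 0 ≤ a) (hb : 0 ≤ b) (hc : 0 ≤ c) (he : 0 ≤ e)
    (haL : a ≤ L) (hbL : b ≤ L) (hcL : c ≤ L) (heL : e ≤ L) (hL : 1 ≤ L)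
    (v w : E × F) :
    ‖(p + a • v.1 + c • w.1, q + b • v.2 + e • w.2)‖ ≤
      (1 + ‖p‖ + ‖q‖) * L * ((1 + ‖v‖) * (1 + ‖w‖)) := by
  have hv1 : ‖v.1‖ ≤ ‖v‖ := norm_fst_le v
  have hv2 : ‖v.2‖ ≤ ‖v‖ := norm_snd_le v
  have hw1 : ‖w.1‖ ≤ ‖w‖ := norm_fst_le w
  have hw2 : ‖w.2‖ ≤ ‖w‖ := norm_snd_le w
  have hv : 0 ≤ ‖v‖ := norm_nonneg v
  have hw : 0 ≤ ‖w‖ := norm_nonneg w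
  have hp : 0 ≤ ‖p‖ := norm_nonneg p
  have hq : 0 ≤ ‖q‖ := norm_nonneg q
  have h1 : ‖p + a • v.1 + c • w.1‖ ≤ ‖p‖ + a * ‖v‖ + c * ‖w‖ := by
    calc ‖p + a • v.1 + c • w.1‖ ≤ ‖p + a • v.1‖ + ‖c • w.1‖ := norm_add_le _ _
      _ ≤ (‖p‖ + ‖a • v.1‖) + ‖c • w.1‖ := by
          have := norm_add_le p (a • v.1); linarith
      _ ≤ ‖p‖ + a * ‖v‖ + c * ‖w‖ := by
          rw [norm_smul, norm_smul, Real.norm_eq_abs, Real.norm_eq_abs,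
            abs_of_nonneg ha, abs_of_nonneg hc]
          have g1 := mul_le_mul_of_nonneg_left hv1 ha
          have g2 := mul_le_mul_of_nonneg_left hw1 hc
          linarith
  have h2 : ‖q + b • v.2 + e • w.2‖ ≤ ‖q‖ + b * ‖v‖ + e * ‖w‖ := by
    calc ‖q + b • v.2 + e • w.2‖ ≤ ‖q + b • v.2‖ + ‖e • w.2‖ := norm_add_le _ _
      _ ≤ (‖q‖ + ‖b • v.2‖) + ‖e • w.2‖ := by
          have := norm_add_le q (b • v.2); linarith
      _ ≤ ‖q‖ + b * ‖v‖ + e * ‖w‖ := by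
          rw [norm_smul, norm_smul, Real.norm_eq_abs, Real.norm_eq_abs,
            abs_of_nonneg hb, abs_of_nonneg he]
          have g1 := mul_le_mul_of_nonneg_left hv2 hb
          have g2 := mul_le_mul_of_nonneg_left hw2 he
          linarith
  rw [Prod.norm_def]
  apply max_le
  · calc ‖p + a • v.1 + c • w.1‖ ≤ ‖p‖ + a * ‖v‖ + c * ‖w‖ := h1
      _ ≤ (1 + ‖p‖ + ‖q‖) * L * ((1 + ‖v‖) * (1 + ‖w‖)) := by
          have := aff_bound3 hp hq hv hw ha hc haL hcL hL; linarith
  · calc ‖q + b • v.2 + e • w.2‖ ≤ ‖q‖ + b * ‖v‖ + e * ‖w‖ := h2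
      _ ≤ (1 + ‖p‖ + ‖q‖) * L * ((1 + ‖v‖) * (1 + ‖w‖)) := by
          have h3 : ‖q‖ + b * ‖v‖ + e * ‖w‖ ≤ (1 + ‖q‖ + ‖p‖) * L * ((1 + ‖v‖) * (1 + ‖w‖)) :=
            aff_bound3 hq hp hv hw hb he hbL heL hL
          nlinarith

lemma locLip_phi_affine {φ : E × F → ℝ} (hφ : LocLip φ) (p : E) (q : F)
    {a b L : ℝ} (ha : 0 ≤ a) (hb : 0 ≤ b) (haL : a ≤ L) (hbL : b ≤ L) (hL : 1 ≤ L) :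
    LocLip (fun v : E × F => φ (p + a • v.1, q + b • v.2)) := by
  apply locLip_comp_affine_s7 hφ (fun v : E × F => (p + a • v.1, q + b • v.2))
    ((1 + ‖p‖ + ‖q‖) * L) L
  · have hp := norm_nonneg p
    have hq := norm_nonneg q
    nlinarith
  · linarith
  · intro v w
    have e1 : (p + a • v.1) - (p + a • w.1) = a • (v.1 - w.1) := by
      rw [smul_sub]; abel
    have e2 : (q + b • v.2) - (q + b • w.2) = b • (v.2 - w.2) := by
      rw [smul_sub]; abel
    have d1 : ‖v.1 - w.1‖ ≤ ‖v - w‖ := by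
      have := norm_fst_le (v - w); simpa using this
    have d2 : ‖v.2 - w.2‖ ≤ ‖v - w‖ := by
      have := norm_snd_le (v - w); simpa using this
    have hvw := norm_nonneg (v - w)
    rw [Prod.norm_def]
    apply max_le
    · show ‖((p + a • v.1, q + b • v.2) - (p + a • w.1, q + b • w.2)).1‖ ≤ L * ‖v - w‖
      rw [Prod.fst_sub]
      simp only
      rw [e1, norm_smul, Real.norm_eq_abs, abs_of_nonneg ha]
      nlinarith
    · show ‖((p + a • v.1, q + b • v.2) - (p + a • w.1, q + b • w.2)).2‖ ≤ L * ‖v - w‖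
      rw [Prod.snd_sub]
      simp only
      rw [e2, norm_smul, Real.norm_eq_abs, abs_of_nonneg hb]
      nlinarith
  · intro v
    exact norm_affine_pair_le p q ha hb haL hbL hL v

lemma locLip_phi_affine2 {φ : E × F → ℝ} (hφ : LocLip φ) (p : E) (q : F)
    {a b c e L : ℝ} (ha : 0 ≤ a) (hb : 0 ≤ b) (hc : 0 ≤ c) (he : 0 ≤ e)
    (haL : a ≤ L) (hbL : b ≤ L) (hcL : c ≤ L) (heL : e ≤ L) (hL : 1 ≤ L) :
    LocLip (fun vv : (E × F) × (E × F) =>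
      φ (p + a • vv.1.1 + c • vv.2.1, q + b • vv.1.2 + e • vv.2.2)) := by
  apply locLip_comp_affine_s7 hφ
    (fun vv : (E × F) × (E × F) =>
      (p + a • vv.1.1 + c • vv.2.1, q + b • vv.1.2 + e • vv.2.2))
    ((1 + ‖p‖ + ‖q‖) * (2 * L)) (2 * L)
  · have hp := norm_nonneg p
    have hq := norm_nonneg q
    nlinarith
  · linarith
  · intro v w
    have d11 : ‖v.1.1 - w.1.1‖ ≤ ‖v - w‖ := by
      have g1 : ‖(v - w).1.1‖ ≤ ‖(v - w).1‖ := norm_fst_le _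
      have g2 : ‖(v - w).1‖ ≤ ‖v - w‖ := norm_fst_le _
      simpa using le_trans g1 g2
    have d12 : ‖v.1.2 - w.1.2‖ ≤ ‖v - w‖ := by
      have g1 : ‖(v - w).1.2‖ ≤ ‖(v - w).1‖ := norm_snd_le _
      have g2 : ‖(v - w).1‖ ≤ ‖v - w‖ := norm_fst_le _
      simpa using le_trans g1 g2
    have d21 : ‖v.2.1 - w.2.1‖ ≤ ‖v - w‖ := by
      have g1 : ‖(v - w).2.1‖ ≤ ‖(v - w).2‖ := norm_fst_le _
      have g2 : ‖(v - w).2‖ ≤ ‖v - w‖ := norm_snd_le _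
      simpa using le_trans g1 g2
    have d22 : ‖v.2.2 - w.2.2‖ ≤ ‖v - w‖ := by
      have g1 : ‖(v - w).2.2‖ ≤ ‖(v - w).2‖ := norm_snd_le _
      have g2 : ‖(v - w).2‖ ≤ ‖v - w‖ := norm_snd_le _
      simpa using le_trans g1 g2
    have hvw := norm_nonneg (v - w)
    have e1 : (p + a • v.1.1 + c • v.2.1) - (p + a • w.1.1 + c • w.2.1)
        = a • (v.1.1 - w.1.1) + c • (v.2.1 - w.2.1) := by
      rw [smul_sub, smul_sub]; abel
    have e2 : (q + b • v.1.2 + e • v.2.2) - (q + b • w.1.2 + e • w.2.2)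
        = b • (v.1.2 - w.1.2) + e • (v.2.2 - w.2.2) := by
      rw [smul_sub, smul_sub]; abel
    rw [Prod.norm_def]
    apply max_le
    · show ‖((p + a • v.1.1 + c • v.2.1, q + b • v.1.2 + e • v.2.2)
        - (p + a • w.1.1 + c • w.2.1, q + b • w.1.2 + e • w.2.2)).1‖ ≤ 2 * L * ‖v - w‖
      rw [Prod.fst_sub]
      simp only
      rw [e1]
      calc ‖a • (v.1.1 - w.1.1) + c • (v.2.1 - w.2.1)‖
          ≤ ‖a • (v.1.1 - w.1.1)‖ + ‖c • (v.2.1 - w.2.1)‖ := norm_add_le _ _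
        _ = a * ‖v.1.1 - w.1.1‖ + c * ‖v.2.1 - w.2.1‖ := by
            rw [norm_smul, norm_smul, Real.norm_eq_abs, Real.norm_eq_abs,
              abs_of_nonneg ha, abs_of_nonneg hc]
        _ ≤ 2 * L * ‖v - w‖ := by nlinarith
    · show ‖((p + a • v.1.1 + c • v.2.1, q + b • v.1.2 + e • v.2.2)
        - (p + a • w.1.1 + c • w.2.1, q + b • w.1.2 + e • w.2.2)).2‖ ≤ 2 * L * ‖v - w‖
      rw [Prod.snd_sub]
      simp only
      rw [e2]
      calc ‖b • (v.1.2 - w.1.2) + e • (v.2.2 - w.2.2)‖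
          ≤ ‖b • (v.1.2 - w.1.2)‖ + ‖e • (v.2.2 - w.2.2)‖ := norm_add_le _ _
        _ = b * ‖v.1.2 - w.1.2‖ + e * ‖v.2.2 - w.2.2‖ := by
            rw [norm_smul, norm_smul, Real.norm_eq_abs, Real.norm_eq_abs,
              abs_of_nonneg hb, abs_of_nonneg he]
        _ ≤ 2 * L * ‖v - w‖ := by nlinarith
  · intro v
    have hv11 : ‖v.1.1‖ ≤ ‖v‖ := le_trans (norm_fst_le v.1) (norm_fst_le v)
    have hv12 : ‖v.1.2‖ ≤ ‖v‖ := le_trans (norm_snd_le v.1) (norm_fst_le v)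
    have hv21 : ‖v.2.1‖ ≤ ‖v‖ := le_trans (norm_fst_le v.2) (norm_snd_le v)
    have hv22 : ‖v.2.2‖ ≤ ‖v‖ := le_trans (norm_snd_le v.2) (norm_snd_le v)
    have hv : 0 ≤ ‖v‖ := norm_nonneg v
    have hp := norm_nonneg p
    have hq := norm_nonneg q
    have hL0 : (0:ℝ) ≤ L := by linarith
    rw [Prod.norm_def]
    apply max_le
    · calc ‖p + a • v.1.1 + c • v.2.1‖
          ≤ ‖p‖ + ‖a • v.1.1‖ + ‖c • v.2.1‖ := by
            have g1 := norm_add_le (p + a • v.1.1) (c • v.2.1)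
            have g2 := norm_add_le p (a • v.1.1)
            linarith
        _ = ‖p‖ + a * ‖v.1.1‖ + c * ‖v.2.1‖ := by
            rw [norm_smul, norm_smul, Real.norm_eq_abs, Real.norm_eq_abs,
              abs_of_nonneg ha, abs_of_nonneg hc]
        _ ≤ (1 + ‖p‖ + ‖q‖) * (2 * L) * (1 + ‖v‖) := by
            nlinarith [mul_le_mul_of_nonneg_left hv11 ha, mul_le_mul_of_nonneg_left hv21 hc,
              mul_le_mul_of_nonneg_right haL hv, mul_le_mul_of_nonneg_right hcL hv,
              mul_nonneg hp hL0, mul_nonneg hq hL0, mul_nonneg (mul_nonneg hp hL0) hv,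
              mul_nonneg (mul_nonneg hq hL0) hv, mul_nonneg hL0 hv]
    · calc ‖q + b • v.1.2 + e • v.2.2‖
          ≤ ‖q‖ + ‖b • v.1.2‖ + ‖e • v.2.2‖ := by
            have g1 := norm_add_le (q + b • v.1.2) (e • v.2.2)
            have g2 := norm_add_le q (b • v.1.2)
            linarith
        _ = ‖q‖ + b * ‖v.1.2‖ + e * ‖v.2.2‖ := by
            rw [norm_smul, norm_smul, Real.norm_eq_abs, Real.norm_eq_abs,
              abs_of_nonneg hb, abs_of_nonneg he]
        _ ≤ (1 + ‖p‖ + ‖q‖) * (2 * L) * (1 + ‖v‖) := by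
            nlinarith [mul_le_mul_of_nonneg_left hv12 hb, mul_le_mul_of_nonneg_left hv22 he,
              mul_le_mul_of_nonneg_right hbL hv, mul_le_mul_of_nonneg_right heL hv,
              mul_nonneg hp hL0, mul_nonneg hq hL0, mul_nonneg (mul_nonneg hp hL0) hv,
              mul_nonneg (mul_nonneg hq hL0) hv, mul_nonneg hL0 hv]

end Affine
set_option maxHeartbeats 2000000 in
/-- Regularity estimates for `u(t,x,y) = Ê[φ(x + √t X, y + t Y)]` when `(X, Y)` is
`G`-distributed: local Lipschitz estimate in `(x, y)` and `1/2`-Hölder estimate in `t`. -/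
theorem stmt_7 {Ω : Type*} {d : ℕ} (S : SublinExp Ω)
    (X Y : Ω → EuclideanSpace ℝ (Fin d)) (hG : IsGDistributed S X Y)
    (φ : EuclideanSpace ℝ (Fin d) × EuclideanSpace ℝ (Fin d) → ℝ) (hφ : LocLip φ)
    (u : ℝ → EuclideanSpace ℝ (Fin d) → EuclideanSpace ℝ (Fin d) → ℝ)
    (hu : ∀ t x y, u t x y =
      S.E (fun ω => φ (x + Real.sqrt t • X ω, y + t • Y ω))) :
    ∀ T : ℝ, 0 < T → ∃ (C : ℝ) (k : ℕ), 0 < C ∧ 0 < k ∧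
      (∀ t ∈ Set.Icc (0 : ℝ) T, ∀ x y xb yb : EuclideanSpace ℝ (Fin d),
        |u t x y - u t xb yb| ≤
          C * (1 + ‖x‖ ^ k + ‖y‖ ^ k + ‖xb‖ ^ k + ‖yb‖ ^ k) * (‖x - xb‖ + ‖y - yb‖)) ∧
      (∀ t s : ℝ, 0 ≤ t → 0 ≤ s → t + s ≤ T → ∀ x y : EuclideanSpace ℝ (Fin d),
        |u t x y - u (t + s) x y| ≤
          C * (1 + ‖x‖ ^ k + ‖y‖ ^ k) * (s + Real.sqrt s)) := by
  obtain ⟨C₀, hC₀, m, hφm⟩ := hφ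
  have hφ' : LocLip φ := ⟨C₀, hC₀, m, hφm⟩
  obtain ⟨hV, Xb, Yb, ⟨hSD, hInd⟩, hGD⟩ := hG
  intro T hT
  set L : ℝ := 1 + T + Real.sqrt T with hLdef
  have hsT : 0 ≤ Real.sqrt T := Real.sqrt_nonneg T
  have hL1 : 1 ≤ L := by simp only [hLdef]; linarith
  have hL0 : 0 < L := by linarith
  have hμ1 := one_le_moment S hV (m + 1)
  have hmono := moment_mono S hV (Nat.le_succ m)
  set μ := S.E (fun ω => (1 + ‖((X ω, Y ω) : _ × _)‖) ^ (m + 1)) with hμdef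
  have hμ0 : 0 < μ := by linarith
  set C₁ : ℝ := 21 * C₀ * 9 ^ m * L ^ m * μ with hC₁def
  set C₂ : ℝ := 9 * C₀ * 3 ^ m * L ^ m * μ * μ with hC₂def
  have hC₁pos : 0 < C₁ := by
    apply mul_pos (mul_pos (mul_pos (mul_pos (by norm_num) hC₀) (by positivity))
      (pow_pos hL0 m)) hμ0
  have hC₂pos : 0 < C₂ := by
    apply mul_pos (mul_pos (mul_pos (mul_pos (mul_pos (by norm_num) hC₀) (by positivity))
      (pow_pos hL0 m)) hμ0) hμ0
  refine ⟨max C₁ C₂, m + 1, lt_of_lt_of_le hC₁pos (le_max_left _ _), Nat.succ_pos m, ?_, ?_⟩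
  · -- spatial estimate
    rintro t ⟨ht0, htT⟩ x y xb yb
    have hst : 0 ≤ Real.sqrt t := Real.sqrt_nonneg t
    have hstL : Real.sqrt t ≤ L := by
      have h1 : Real.sqrt t ≤ Real.sqrt T := Real.sqrt_le_sqrt htT
      linarith
    have htL : t ≤ L := by linarith
    set D : ℝ := ‖x - xb‖ + ‖y - yb‖ with hDdef
    have hD0 : 0 ≤ D := by positivity
    set B : ℝ := 1 + ‖x‖ + ‖y‖ + ‖xb‖ + ‖yb‖ with hBdef
    have hB1 : 1 ≤ B := by
      have := norm_nonneg x; have := norm_nonneg y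
      have := norm_nonneg xb; have := norm_nonneg yb
      simp only [hBdef]; linarith
    have hBL1 : 1 ≤ B * L := by nlinarith
    have hBL0 : 0 ≤ B * L := by linarith
    set c : ℝ := 3 * C₀ * (B * L) ^ m * D with hcdef
    have hc0 : 0 ≤ c := by
      apply mul_nonneg (mul_nonneg (mul_nonneg (by norm_num) hC₀.le)
        (pow_nonneg hBL0 m)) hD0
    have hf : LocLip (fun v : EuclideanSpace ℝ (Fin d) × EuclideanSpace ℝ (Fin d) =>
        φ (x + Real.sqrt t • v.1, y + t • v.2)) :=
      locLip_phi_affine hφ' x y hst ht0 hstL htL hL1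
    have hg : LocLip (fun v : EuclideanSpace ℝ (Fin d) × EuclideanSpace ℝ (Fin d) =>
        φ (xb + Real.sqrt t • v.1, yb + t • v.2)) :=
      locLip_phi_affine hφ' xb yb hst ht0 hstL htL hL1
    have hz : LocLip (fun v : EuclideanSpace ℝ (Fin d) × EuclideanSpace ℝ (Fin d) =>
        c * (1 + ‖v‖) ^ m) := locLip_const_mul (locLip_pow_norm m) c
    have hb : ∀ v : EuclideanSpace ℝ (Fin d) × EuclideanSpace ℝ (Fin d),
        |φ (x + Real.sqrt t • v.1, y + t • v.2) - φ (xb + Real.sqrt t • v.1, yb + t • v.2)|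
          ≤ c * (1 + ‖v‖) ^ m := by
      intro v
      have hv : 0 ≤ ‖v‖ := norm_nonneg v
      have e := hφm (x + Real.sqrt t • v.1, y + t • v.2) (xb + Real.sqrt t • v.1, yb + t • v.2)
      have ediff : (x + Real.sqrt t • v.1, y + t • v.2)
          - (xb + Real.sqrt t • v.1, yb + t • v.2) = ((x - xb, y - yb) :
            EuclideanSpace ℝ (Fin d) × EuclideanSpace ℝ (Fin d)) := by
        rw [Prod.mk_sub_mk]
        exact congrArg₂ Prod.mk (by abel) (by abel)
      rw [ediff] at e
      have hnd : ‖((x - xb, y - yb) : EuclideanSpace ℝ (Fin d) × EuclideanSpace ℝ (Fin d))‖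
          ≤ D := by
        rw [Prod.norm_def]
        apply max_le
        · have := norm_nonneg (y - yb); simp only [hDdef]; linarith
        · have := norm_nonneg (x - xb); simp only [hDdef]; linarith
      have hP : ‖(x + Real.sqrt t • v.1, y + t • v.2)‖ ≤ B * L * (1 + ‖v‖) := by
        have h1 := norm_affine_pair_le x y hst ht0 hstL htL hL1 v
        have := norm_nonneg xb; have := norm_nonneg yb
        have h2 : (1 + ‖x‖ + ‖y‖) * L * (1 + ‖v‖) ≤ B * L * (1 + ‖v‖) := by
          apply mul_le_mul_of_nonneg_right (mul_le_mul_of_nonneg_right (by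
            simp only [hBdef]; linarith) hL0.le) (by linarith)
        linarith
      have hQ : ‖(xb + Real.sqrt t • v.1, yb + t • v.2)‖ ≤ B * L * (1 + ‖v‖) := by
        have h1 := norm_affine_pair_le xb yb hst ht0 hstL htL hL1 v
        have := norm_nonneg x; have := norm_nonneg y
        have h2 : (1 + ‖xb‖ + ‖yb‖) * L * (1 + ‖v‖) ≤ B * L * (1 + ‖v‖) := by
          apply mul_le_mul_of_nonneg_right (mul_le_mul_of_nonneg_right (by
            simp only [hBdef]; linarith) hL0.le) (by linarith)
        linarith
      have hBLv1 : 1 ≤ B * L * (1 + ‖v‖) :=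
        le_trans hBL1 (le_mul_of_one_le_right hBL0 (by linarith))
      have hPm : ‖(x + Real.sqrt t • v.1, y + t • v.2)‖ ^ m ≤ (B * L) ^ m * (1 + ‖v‖) ^ m := by
        calc ‖(x + Real.sqrt t • v.1, y + t • v.2)‖ ^ m ≤ (B * L * (1 + ‖v‖)) ^ m :=
              pow_le_pow_left₀ (norm_nonneg _) hP m
          _ = (B * L) ^ m * (1 + ‖v‖) ^ m := mul_pow _ _ _
      have hQm : ‖(xb + Real.sqrt t • v.1, yb + t • v.2)‖ ^ m ≤ (B * L) ^ m * (1 + ‖v‖) ^ m := by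
        calc ‖(xb + Real.sqrt t • v.1, yb + t • v.2)‖ ^ m ≤ (B * L * (1 + ‖v‖)) ^ m :=
              pow_le_pow_left₀ (norm_nonneg _) hQ m
          _ = (B * L) ^ m * (1 + ‖v‖) ^ m := mul_pow _ _ _
      have hone : (1:ℝ) ≤ (B * L) ^ m * (1 + ‖v‖) ^ m := by
        calc (1:ℝ) = 1 ^ m * 1 ^ m := by norm_num
          _ ≤ (B * L) ^ m * (1 + ‖v‖) ^ m := by
              apply mul_le_mul (pow_le_pow_left₀ zero_le_one hBL1 m)
                (pow_le_pow_left₀ zero_le_one (by linarith) m) (by norm_num) (by positivity)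
      have hsum : 1 + ‖(x + Real.sqrt t • v.1, y + t • v.2)‖ ^ m
          + ‖(xb + Real.sqrt t • v.1, yb + t • v.2)‖ ^ m
          ≤ 3 * ((B * L) ^ m * (1 + ‖v‖) ^ m) := by linarith
      calc |φ (x + Real.sqrt t • v.1, y + t • v.2)
            - φ (xb + Real.sqrt t • v.1, yb + t • v.2)|
          ≤ C₀ * (1 + ‖(x + Real.sqrt t • v.1, y + t • v.2)‖ ^ m
            + ‖(xb + Real.sqrt t • v.1, yb + t • v.2)‖ ^ m)
            * ‖((x - xb, y - yb) : EuclideanSpace ℝ (Fin d) × EuclideanSpace ℝ (Fin d))‖ := e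
        _ ≤ C₀ * (3 * ((B * L) ^ m * (1 + ‖v‖) ^ m)) * D := by
            apply mul_le_mul (mul_le_mul_of_nonneg_left hsum hC₀.le) hnd (norm_nonneg _)
            have : (0:ℝ) ≤ (B * L) ^ m * (1 + ‖v‖) ^ m := by positivity
            nlinarith
        _ = c * (1 + ‖v‖) ^ m := by rw [hcdef]; ring
    have key := E_abs_sub_le S hV hf hg hz hb
    have mom := E_le_mul_moment S hV hz hc0 m (fun v => le_refl _)
    rw [hu t x y, hu t xb yb]
    refine le_trans key (le_trans mom ?_)
    -- numeric: c * Mm ≤ C (1 + Σ) D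
    have hMm : S.E (fun ω => (1 + ‖((X ω, Y ω) : _ × _)‖) ^ m) ≤ μ := hmono
    have step1 : c * S.E (fun ω => (1 + ‖((X ω, Y ω) : _ × _)‖) ^ m) ≤ c * μ :=
      mul_le_mul_of_nonneg_left hMm hc0
    have hx := norm_nonneg x
    have hy := norm_nonneg y
    have hxb := norm_nonneg xb
    have hyb := norm_nonneg yb
    have hSig : (0:ℝ) ≤ 1 + ‖x‖ ^ (m+1) + ‖y‖ ^ (m+1) + ‖xb‖ ^ (m+1) + ‖yb‖ ^ (m+1) := by
      positivity
    have hBm : B ^ m ≤ 7 * 9 ^ m *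
        (1 + ‖x‖ ^ (m+1) + ‖y‖ ^ (m+1) + ‖xb‖ ^ (m+1) + ‖yb‖ ^ (m+1)) := by
      have t1 : B ^ m ≤ 3 ^ m * (1 + (‖x‖ + ‖xb‖) ^ m + (‖y‖ + ‖yb‖) ^ m) := by
        rw [show B = 1 + (‖x‖ + ‖xb‖) + (‖y‖ + ‖yb‖) by rw [hBdef]; ring]
        exact tri3 m (by linarith) (by linarith)
      have t2 : (‖x‖ + ‖xb‖) ^ m ≤ 3 ^ m * (1 + ‖x‖ ^ m + ‖xb‖ ^ m) := by
        calc (‖x‖ + ‖xb‖) ^ m ≤ (1 + ‖x‖ + ‖xb‖) ^ m :=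
              pow_le_pow_left₀ (by linarith) (by linarith) m
          _ ≤ 3 ^ m * (1 + ‖x‖ ^ m + ‖xb‖ ^ m) := tri3 m hx hxb
      have t3 : (‖y‖ + ‖yb‖) ^ m ≤ 3 ^ m * (1 + ‖y‖ ^ m + ‖yb‖ ^ m) := by
        calc (‖y‖ + ‖yb‖) ^ m ≤ (1 + ‖y‖ + ‖yb‖) ^ m :=
              pow_le_pow_left₀ (by linarith) (by linarith) m
          _ ≤ 3 ^ m * (1 + ‖y‖ ^ m + ‖yb‖ ^ m) := tri3 m hy hyb
      have p1 : ‖x‖ ^ m ≤ 1 + ‖x‖ ^ (m+1) := pow_le_one_add_pow hx (Nat.le_succ m)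
      have p2 : ‖y‖ ^ m ≤ 1 + ‖y‖ ^ (m+1) := pow_le_one_add_pow hy (Nat.le_succ m)
      have p3 : ‖xb‖ ^ m ≤ 1 + ‖xb‖ ^ (m+1) := pow_le_one_add_pow hxb (Nat.le_succ m)
      have p4 : ‖yb‖ ^ m ≤ 1 + ‖yb‖ ^ (m+1) := pow_le_one_add_pow hyb (Nat.le_succ m)
      have h3m : (1:ℝ) ≤ 3 ^ m := one_le_pow₀ (by norm_num)
      have h9m : (3:ℝ) ^ m * 3 ^ m = 9 ^ m := by rw [← mul_pow]; norm_num
      have h3le9 : (3:ℝ) ^ m ≤ 9 ^ m := pow_le_pow_left₀ (by norm_num) (by norm_num) m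
      have h9m1 : (1:ℝ) ≤ 9 ^ m := one_le_pow₀ (by norm_num)
      nlinarith [pow_nonneg hx (m+1), pow_nonneg hy (m+1), pow_nonneg hxb (m+1),
        pow_nonneg hyb (m+1), pow_nonneg hx m, pow_nonneg hy m, pow_nonneg hxb m,
        pow_nonneg hyb m]
    have hcμ : c * μ ≤ max C₁ C₂ *
        (1 + ‖x‖ ^ (m+1) + ‖y‖ ^ (m+1) + ‖xb‖ ^ (m+1) + ‖yb‖ ^ (m+1)) * D := by
      have e1 : c * μ = 3 * C₀ * B ^ m * L ^ m * μ * D := by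
        rw [hcdef, mul_pow]; ring
      have e2 : 3 * C₀ * B ^ m * L ^ m * μ * D ≤ C₁ *
          (1 + ‖x‖ ^ (m+1) + ‖y‖ ^ (m+1) + ‖xb‖ ^ (m+1) + ‖yb‖ ^ (m+1)) * D := by
        rw [hC₁def]
        have g1 : 3 * C₀ * B ^ m * L ^ m * μ ≤ 21 * C₀ * 9 ^ m *
            (1 + ‖x‖ ^ (m+1) + ‖y‖ ^ (m+1) + ‖xb‖ ^ (m+1) + ‖yb‖ ^ (m+1)) * L ^ m * μ := by
          have g2 : 3 * C₀ * B ^ m ≤ 3 * C₀ * (7 * 9 ^ m *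
              (1 + ‖x‖ ^ (m+1) + ‖y‖ ^ (m+1) + ‖xb‖ ^ (m+1) + ‖yb‖ ^ (m+1))) :=
            mul_le_mul_of_nonneg_left hBm (by linarith)
          have g3 := mul_le_mul_of_nonneg_right (mul_le_mul_of_nonneg_right g2
            (pow_nonneg hL0.le m)) hμ0.le
          calc 3 * C₀ * B ^ m * L ^ m * μ ≤ 3 * C₀ * (7 * 9 ^ m *
              (1 + ‖x‖ ^ (m+1) + ‖y‖ ^ (m+1) + ‖xb‖ ^ (m+1) + ‖yb‖ ^ (m+1))) * L ^ m * μ := g3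
            _ = 21 * C₀ * 9 ^ m *
              (1 + ‖x‖ ^ (m+1) + ‖y‖ ^ (m+1) + ‖xb‖ ^ (m+1) + ‖yb‖ ^ (m+1)) * L ^ m * μ := by
                ring
        calc 3 * C₀ * B ^ m * L ^ m * μ * D ≤ 21 * C₀ * 9 ^ m *
            (1 + ‖x‖ ^ (m+1) + ‖y‖ ^ (m+1) + ‖xb‖ ^ (m+1) + ‖yb‖ ^ (m+1)) * L ^ m * μ * D :=
              mul_le_mul_of_nonneg_right g1 hD0
          _ = 21 * C₀ * 9 ^ m * L ^ m * μ *
              (1 + ‖x‖ ^ (m+1) + ‖y‖ ^ (m+1) + ‖xb‖ ^ (m+1) + ‖yb‖ ^ (m+1)) * D := by ring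
      have e3 : C₁ * (1 + ‖x‖ ^ (m+1) + ‖y‖ ^ (m+1) + ‖xb‖ ^ (m+1) + ‖yb‖ ^ (m+1)) * D ≤
          max C₁ C₂ * (1 + ‖x‖ ^ (m+1) + ‖y‖ ^ (m+1) + ‖xb‖ ^ (m+1) + ‖yb‖ ^ (m+1)) * D := by
        apply mul_le_mul_of_nonneg_right (mul_le_mul_of_nonneg_right (le_max_left _ _) hSig) hD0
      linarith
    linarith
  · -- time estimate
    intro t s ht0 hs0 htsT x y
    have hx := norm_nonneg x
    have hy := norm_nonneg y
    have htT : t ≤ T := by linarith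
    have hsT' : s ≤ T := by linarith
    have hst : 0 ≤ Real.sqrt t := Real.sqrt_nonneg t
    have hss : 0 ≤ Real.sqrt s := Real.sqrt_nonneg s
    have hstL : Real.sqrt t ≤ L := by
      have := Real.sqrt_le_sqrt htT; linarith
    have hssL : Real.sqrt s ≤ L := by
      have := Real.sqrt_le_sqrt hsT'; linarith
    have htL : t ≤ L := by linarith
    have hsL : s ≤ L := by linarith
    set B : ℝ := 1 + ‖x‖ + ‖y‖ with hBdef
    have hB1 : 1 ≤ B := by simp only [hBdef]; linarith
    have hBL1 : 1 ≤ B * L := by nlinarith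
    have hBL0 : 0 ≤ B * L := by linarith
    set ψ : EuclideanSpace ℝ (Fin d) × EuclideanSpace ℝ (Fin d) → ℝ :=
      fun v => φ (x + v.1, y + v.2) with hψdef
    set g : EuclideanSpace ℝ (Fin d) × EuclideanSpace ℝ (Fin d) → ℝ :=
      fun v => φ (x + Real.sqrt t • v.1, y + t • v.2) with hgdef
    set Φ : (EuclideanSpace ℝ (Fin d) × EuclideanSpace ℝ (Fin d)) ×
        (EuclideanSpace ℝ (Fin d) × EuclideanSpace ℝ (Fin d)) → ℝ :=
      fun vv => φ (x + Real.sqrt t • vv.1.1 + Real.sqrt s • vv.2.1,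
        y + t • vv.1.2 + s • vv.2.2) with hΦdef
    set h : EuclideanSpace ℝ (Fin d) × EuclideanSpace ℝ (Fin d) → ℝ :=
      fun v => S.E (fun ω' => Φ (v, (X ω', Y ω'))) with hhdef
    have hψL : LocLip ψ := by
      have := locLip_phi_affine hφ' x y zero_le_one zero_le_one hL1 hL1 hL1
      simpa only [one_smul] using this
    have hgL : LocLip g := locLip_phi_affine hφ' x y hst ht0 hstL htL hL1
    have hΦL : LocLip Φ :=
      locLip_phi_affine2 hφ' x y hst ht0 hss hs0 hstL htL hssL hsL hL1
    have hΦvL : ∀ v : EuclideanSpace ℝ (Fin d) × EuclideanSpace ℝ (Fin d),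
        LocLip (fun v' => Φ (v, v')) := fun v =>
      locLip_phi_affine hφ' (x + Real.sqrt t • v.1) (y + t • v.2) hss hs0 hssL hsL hL1
    -- Step A: identify u (t+s) x y
    have eq1 := hGD (Real.sqrt t) (Real.sqrt s) hst hss ψ hψL
    rw [Real.sq_sqrt ht0, Real.sq_sqrt hs0] at eq1
    have equ : u (t + s) x y = S.E (fun ω => h (X ω, Y ω)) := by
      calc u (t + s) x y
          = S.E (fun ω => ψ (Real.sqrt (t + s) • X ω, (t + s) • Y ω)) := by
            rw [hu (t + s) x y]
        _ = S.E (fun ω => ψ (Real.sqrt t • X ω + Real.sqrt s • Xb ω,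
              t • Y ω + s • Yb ω)) := eq1.symm
        _ = S.E (fun ω => Φ ((X ω, Y ω), (Xb ω, Yb ω))) := by
            refine congrArg S.E (funext fun ω => ?_)
            show φ (x + (Real.sqrt t • X ω + Real.sqrt s • Xb ω),
                y + (t • Y ω + s • Yb ω)) =
              φ (x + Real.sqrt t • X ω + Real.sqrt s • Xb ω, y + t • Y ω + s • Yb ω)
            exact congrArg φ (congrArg₂ Prod.mk (add_assoc x _ _).symm (add_assoc y _ _).symm)
        _ = S.E (fun ω => S.E (fun ω' => Φ ((X ω, Y ω), (Xb ω', Yb ω')))) := hInd Φ hΦL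
        _ = S.E (fun ω => h (X ω, Y ω)) := by
            refine congrArg S.E (funext fun ω => ?_)
            exact (hSD (fun v' => Φ ((X ω, Y ω), v')) (hΦvL (X ω, Y ω))).symm
    -- constants
    set cw : ℝ := 3 * C₀ * (B * L) ^ m * (Real.sqrt s + s) * μ with hcwdef
    have hcw0 : 0 ≤ cw := by
      apply mul_nonneg (mul_nonneg (mul_nonneg (mul_nonneg (by norm_num) hC₀.le)
        (pow_nonneg hBL0 m)) (by linarith)) hμ0.le
    have hw : LocLip (fun v : EuclideanSpace ℝ (Fin d) × EuclideanSpace ℝ (Fin d) =>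
        cw * (1 + ‖v‖) ^ m) := locLip_const_mul (locLip_pow_norm m) cw
    -- LocLip h
    have hhL : LocLip h := by
      refine ⟨3 * C₀ * (B * L) ^ m * L * 3 ^ m * μ + 1, ?_, m, fun v w' => ?_⟩
      · have h0 : 0 ≤ 3 * C₀ * (B * L) ^ m * L * 3 ^ m * μ := by
          apply mul_nonneg (mul_nonneg (mul_nonneg (mul_nonneg (mul_nonneg (by norm_num)
            hC₀.le) (pow_nonneg hBL0 m)) hL0.le) (by positivity)) hμ0.le
        linarith
      · have hvn := norm_nonneg v
        have hwn := norm_nonneg w'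
        have hvw := norm_nonneg (v - w')
        set cvw : ℝ := 3 * C₀ * (B * L) ^ m * (1 + ‖v‖ + ‖w'‖) ^ m * (L * ‖v - w'‖)
          with hcvwdef
        have hcvw0 : 0 ≤ cvw := by
          apply mul_nonneg (mul_nonneg (mul_nonneg (mul_nonneg (by norm_num) hC₀.le)
            (pow_nonneg hBL0 m)) (by positivity)) (by positivity)
        have hzz : LocLip (fun v' : EuclideanSpace ℝ (Fin d) × EuclideanSpace ℝ (Fin d) =>
            cvw * (1 + ‖v'‖) ^ m) := locLip_const_mul (locLip_pow_norm m) cvw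
        have hb' : ∀ v' : EuclideanSpace ℝ (Fin d) × EuclideanSpace ℝ (Fin d),
            |Φ (v, v') - Φ (w', v')| ≤ cvw * (1 + ‖v'‖) ^ m := by
          intro v'
          have hv'n := norm_nonneg v'
          have e := hφm (x + Real.sqrt t • v.1 + Real.sqrt s • v'.1,
              y + t • v.2 + s • v'.2)
            (x + Real.sqrt t • w'.1 + Real.sqrt s • v'.1, y + t • w'.2 + s • v'.2)
          have ediff : (x + Real.sqrt t • v.1 + Real.sqrt s • v'.1, y + t • v.2 + s • v'.2)
              - (x + Real.sqrt t • w'.1 + Real.sqrt s • v'.1, y + t • w'.2 + s • v'.2)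
              = ((Real.sqrt t • (v.1 - w'.1), t • (v.2 - w'.2)) :
                EuclideanSpace ℝ (Fin d) × EuclideanSpace ℝ (Fin d)) := by
            rw [Prod.mk_sub_mk]
            exact congrArg₂ Prod.mk (by rw [smul_sub]; abel) (by rw [smul_sub]; abel)
          rw [ediff] at e
          have d1 : ‖v.1 - w'.1‖ ≤ ‖v - w'‖ := by
            have := norm_fst_le (v - w'); simpa using this
          have d2 : ‖v.2 - w'.2‖ ≤ ‖v - w'‖ := by
            have := norm_snd_le (v - w'); simpa using this
          have hnd : ‖((Real.sqrt t • (v.1 - w'.1), t • (v.2 - w'.2)) :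
              EuclideanSpace ℝ (Fin d) × EuclideanSpace ℝ (Fin d))‖ ≤ L * ‖v - w'‖ := by
            rw [Prod.norm_def]
            apply max_le
            · rw [norm_smul, Real.norm_eq_abs, abs_of_nonneg hst]
              exact mul_le_mul hstL d1 (norm_nonneg _) hL0.le
            · rw [norm_smul, Real.norm_eq_abs, abs_of_nonneg ht0]
              exact mul_le_mul htL d2 (norm_nonneg _) hL0.le
          have hfac : (1 + ‖v‖) * (1 + ‖v'‖) ≤ (1 + ‖v‖ + ‖w'‖) * (1 + ‖v'‖) :=
            mul_le_mul_of_nonneg_right (by linarith) (by linarith)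
          have hfac' : (1 + ‖w'‖) * (1 + ‖v'‖) ≤ (1 + ‖v‖ + ‖w'‖) * (1 + ‖v'‖) :=
            mul_le_mul_of_nonneg_right (by linarith) (by linarith)
          have hP : ‖(x + Real.sqrt t • v.1 + Real.sqrt s • v'.1, y + t • v.2 + s • v'.2)‖
              ≤ B * L * ((1 + ‖v‖ + ‖w'‖) * (1 + ‖v'‖)) := by
            calc ‖(x + Real.sqrt t • v.1 + Real.sqrt s • v'.1, y + t • v.2 + s • v'.2)‖
                ≤ B * L * ((1 + ‖v‖) * (1 + ‖v'‖)) :=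
                  norm_affine_triple_le x y hst ht0 hss hs0 hstL htL hssL hsL hL1 v v'
              _ ≤ B * L * ((1 + ‖v‖ + ‖w'‖) * (1 + ‖v'‖)) :=
                  mul_le_mul_of_nonneg_left hfac hBL0
          have hQ : ‖(x + Real.sqrt t • w'.1 + Real.sqrt s • v'.1, y + t • w'.2 + s • v'.2)‖
              ≤ B * L * ((1 + ‖v‖ + ‖w'‖) * (1 + ‖v'‖)) := by
            calc ‖(x + Real.sqrt t • w'.1 + Real.sqrt s • v'.1, y + t • w'.2 + s • v'.2)‖
                ≤ B * L * ((1 + ‖w'‖) * (1 + ‖v'‖)) :=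
                  norm_affine_triple_le x y hst ht0 hss hs0 hstL htL hssL hsL hL1 w' v'
              _ ≤ B * L * ((1 + ‖v‖ + ‖w'‖) * (1 + ‖v'‖)) :=
                  mul_le_mul_of_nonneg_left hfac' hBL0
          have hPm : ‖(x + Real.sqrt t • v.1 + Real.sqrt s • v'.1,
              y + t • v.2 + s • v'.2)‖ ^ m
              ≤ (B * L) ^ m * ((1 + ‖v‖ + ‖w'‖) ^ m * (1 + ‖v'‖) ^ m) := by
            calc ‖(x + Real.sqrt t • v.1 + Real.sqrt s • v'.1, y + t • v.2 + s • v'.2)‖ ^ m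
                ≤ (B * L * ((1 + ‖v‖ + ‖w'‖) * (1 + ‖v'‖))) ^ m :=
                  pow_le_pow_left₀ (norm_nonneg _) hP m
              _ = (B * L) ^ m * ((1 + ‖v‖ + ‖w'‖) ^ m * (1 + ‖v'‖) ^ m) := by
                  rw [mul_pow _ ((1 + ‖v‖ + ‖w'‖) * (1 + ‖v'‖)) m,
                    mul_pow (1 + ‖v‖ + ‖w'‖) (1 + ‖v'‖) m]
          have hQm : ‖(x + Real.sqrt t • w'.1 + Real.sqrt s • v'.1,
              y + t • w'.2 + s • v'.2)‖ ^ m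
              ≤ (B * L) ^ m * ((1 + ‖v‖ + ‖w'‖) ^ m * (1 + ‖v'‖) ^ m) := by
            calc ‖(x + Real.sqrt t • w'.1 + Real.sqrt s • v'.1, y + t • w'.2 + s • v'.2)‖ ^ m
                ≤ (B * L * ((1 + ‖v‖ + ‖w'‖) * (1 + ‖v'‖))) ^ m :=
                  pow_le_pow_left₀ (norm_nonneg _) hQ m
              _ = (B * L) ^ m * ((1 + ‖v‖ + ‖w'‖) ^ m * (1 + ‖v'‖) ^ m) := by
                  rw [mul_pow _ ((1 + ‖v‖ + ‖w'‖) * (1 + ‖v'‖)) m,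
                    mul_pow (1 + ‖v‖ + ‖w'‖) (1 + ‖v'‖) m]
          have hone : (1:ℝ) ≤ (B * L) ^ m * ((1 + ‖v‖ + ‖w'‖) ^ m * (1 + ‖v'‖) ^ m) := by
            calc (1:ℝ) = 1 ^ m * (1 ^ m * 1 ^ m) := by norm_num
              _ ≤ (B * L) ^ m * ((1 + ‖v‖ + ‖w'‖) ^ m * (1 + ‖v'‖) ^ m) := by
                  apply mul_le_mul (pow_le_pow_left₀ zero_le_one hBL1 m)
                  · apply mul_le_mul (pow_le_pow_left₀ zero_le_one (by linarith) m)
                      (pow_le_pow_left₀ zero_le_one (by linarith) m) (by norm_num)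
                      (by positivity)
                  · norm_num
                  · positivity
          have hsum3 : 1 + ‖(x + Real.sqrt t • v.1 + Real.sqrt s • v'.1,
              y + t • v.2 + s • v'.2)‖ ^ m
              + ‖(x + Real.sqrt t • w'.1 + Real.sqrt s • v'.1, y + t • w'.2 + s • v'.2)‖ ^ m
              ≤ 3 * ((B * L) ^ m * ((1 + ‖v‖ + ‖w'‖) ^ m * (1 + ‖v'‖) ^ m)) := by linarith
          calc |Φ (v, v') - Φ (w', v')|
              ≤ C₀ * (1 + ‖(x + Real.sqrt t • v.1 + Real.sqrt s • v'.1,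
                  y + t • v.2 + s • v'.2)‖ ^ m
                + ‖(x + Real.sqrt t • w'.1 + Real.sqrt s • v'.1,
                  y + t • w'.2 + s • v'.2)‖ ^ m)
                * ‖((Real.sqrt t • (v.1 - w'.1), t • (v.2 - w'.2)) :
                  EuclideanSpace ℝ (Fin d) × EuclideanSpace ℝ (Fin d))‖ := e
            _ ≤ C₀ * (3 * ((B * L) ^ m * ((1 + ‖v‖ + ‖w'‖) ^ m * (1 + ‖v'‖) ^ m)))
                * (L * ‖v - w'‖) := by
                apply mul_le_mul (mul_le_mul_of_nonneg_left hsum3 hC₀.le) hnd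
                  (norm_nonneg _)
                have hp0 : (0:ℝ) ≤ (B * L) ^ m * ((1 + ‖v‖ + ‖w'‖) ^ m * (1 + ‖v'‖) ^ m) := by
                  positivity
                exact mul_nonneg hC₀.le (by linarith)
            _ = cvw * (1 + ‖v'‖) ^ m := by rw [hcvwdef]; ring
        have key' := E_abs_sub_le S hV (hΦvL v) (hΦvL w') hzz hb'
        have mom' := E_le_mul_moment S hV hzz hcvw0 m (fun v' => le_refl _)
        have hq1 := tri3 m hvn hwn
        have hA0 : (0:ℝ) ≤ 3 * C₀ * (B * L) ^ m * L * μ := by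
          apply mul_nonneg (mul_nonneg (mul_nonneg (mul_nonneg (by norm_num) hC₀.le)
            (pow_nonneg hBL0 m)) hL0.le) hμ0.le
        have hSig0 : (0:ℝ) ≤ 1 + ‖v‖ ^ m + ‖w'‖ ^ m := by positivity
        have hchain : cvw * μ ≤ (3 * C₀ * (B * L) ^ m * L * 3 ^ m * μ + 1)
            * (1 + ‖v‖ ^ m + ‖w'‖ ^ m) * ‖v - w'‖ := by
          have e1 : cvw * μ = 3 * C₀ * (B * L) ^ m * L * μ
              * ((1 + ‖v‖ + ‖w'‖) ^ m * ‖v - w'‖) := by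
            rw [hcvwdef]; ring
          have e2 : (1 + ‖v‖ + ‖w'‖) ^ m * ‖v - w'‖
              ≤ 3 ^ m * (1 + ‖v‖ ^ m + ‖w'‖ ^ m) * ‖v - w'‖ :=
            mul_le_mul_of_nonneg_right hq1 hvw
          have e3 := mul_le_mul_of_nonneg_left e2 hA0
          have e4 : 3 * C₀ * (B * L) ^ m * L * μ * (3 ^ m * (1 + ‖v‖ ^ m + ‖w'‖ ^ m)
              * ‖v - w'‖) = (3 * C₀ * (B * L) ^ m * L * 3 ^ m * μ)
              * (1 + ‖v‖ ^ m + ‖w'‖ ^ m) * ‖v - w'‖ := by ring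
          have e5 : (3 * C₀ * (B * L) ^ m * L * 3 ^ m * μ)
              * (1 + ‖v‖ ^ m + ‖w'‖ ^ m) * ‖v - w'‖
              ≤ (3 * C₀ * (B * L) ^ m * L * 3 ^ m * μ + 1)
              * (1 + ‖v‖ ^ m + ‖w'‖ ^ m) * ‖v - w'‖ := by
            apply mul_le_mul_of_nonneg_right (mul_le_mul_of_nonneg_right (by linarith) hSig0) hvw
          linarith
        have hcvwμ : cvw * S.E (fun ω => (1 + ‖((X ω, Y ω) : EuclideanSpace ℝ (Fin d)
            × EuclideanSpace ℝ (Fin d))‖) ^ m) ≤ cvw * μ :=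
          mul_le_mul_of_nonneg_left hmono hcvw0
        calc |h v - h w'|
            ≤ S.E (fun ω' => cvw * (1 + ‖((X ω', Y ω') : EuclideanSpace ℝ (Fin d)
              × EuclideanSpace ℝ (Fin d))‖) ^ m) := key'
          _ ≤ cvw * S.E (fun ω => (1 + ‖((X ω, Y ω) : EuclideanSpace ℝ (Fin d)
              × EuclideanSpace ℝ (Fin d))‖) ^ m) := mom'
          _ ≤ cvw * μ := hcvwμ
          _ ≤ _ := hchain
    -- pointwise bound |g v - h v| ≤ cw * (1+‖v‖)^m
    have hbgh : ∀ v : EuclideanSpace ℝ (Fin d) × EuclideanSpace ℝ (Fin d),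
        |g v - h v| ≤ cw * (1 + ‖v‖) ^ m := by
      intro v
      have hvn := norm_nonneg v
      set cv : ℝ := 3 * C₀ * (B * L) ^ m * (1 + ‖v‖) ^ m * (Real.sqrt s + s) with hcvdef
      have hcv0 : 0 ≤ cv := by
        apply mul_nonneg (mul_nonneg (mul_nonneg (mul_nonneg (by norm_num) hC₀.le)
          (pow_nonneg hBL0 m)) (by positivity)) (by linarith)
      have hzv : LocLip (fun v' : EuclideanSpace ℝ (Fin d) × EuclideanSpace ℝ (Fin d) =>
          cv * (1 + ‖v'‖) ^ (m + 1)) := locLip_const_mul (locLip_pow_norm (m + 1)) cv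
      have hbv : ∀ v' : EuclideanSpace ℝ (Fin d) × EuclideanSpace ℝ (Fin d),
          |g v - Φ (v, v')| ≤ cv * (1 + ‖v'‖) ^ (m + 1) := by
        intro v'
        have hv'n := norm_nonneg v'
        have e := hφm (x + Real.sqrt t • v.1, y + t • v.2)
          (x + Real.sqrt t • v.1 + Real.sqrt s • v'.1, y + t • v.2 + s • v'.2)
        have ediff : (x + Real.sqrt t • v.1, y + t • v.2)
            - (x + Real.sqrt t • v.1 + Real.sqrt s • v'.1, y + t • v.2 + s • v'.2)
            = ((-(Real.sqrt s • v'.1), -(s • v'.2)) :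
              EuclideanSpace ℝ (Fin d) × EuclideanSpace ℝ (Fin d)) := by
          rw [Prod.mk_sub_mk]
          exact congrArg₂ Prod.mk (by abel) (by abel)
        rw [ediff] at e
        have d1 : ‖v'.1‖ ≤ ‖v'‖ := norm_fst_le v'
        have d2 : ‖v'.2‖ ≤ ‖v'‖ := norm_snd_le v'
        have hnd : ‖((-(Real.sqrt s • v'.1), -(s • v'.2)) :
            EuclideanSpace ℝ (Fin d) × EuclideanSpace ℝ (Fin d))‖
            ≤ (Real.sqrt s + s) * (1 + ‖v'‖) := by
          rw [Prod.norm_def, norm_neg, norm_neg, norm_smul, norm_smul, Real.norm_eq_abs,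
            Real.norm_eq_abs, abs_of_nonneg hss, abs_of_nonneg hs0]
          apply max_le
          · nlinarith [mul_le_mul_of_nonneg_left d1 hss, mul_nonneg hs0 hv'n,
              mul_nonneg hss hv'n]
          · nlinarith [mul_le_mul_of_nonneg_left d2 hs0, mul_nonneg hs0 hv'n,
              mul_nonneg hss hv'n]
        have hQ : ‖(x + Real.sqrt t • v.1, y + t • v.2)‖
            ≤ B * L * ((1 + ‖v‖) * (1 + ‖v'‖)) := by
          calc ‖(x + Real.sqrt t • v.1, y + t • v.2)‖ ≤ B * L * (1 + ‖v‖) :=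
                norm_affine_pair_le x y hst ht0 hstL htL hL1 v
            _ ≤ B * L * ((1 + ‖v‖) * (1 + ‖v'‖)) := by
                rw [show B * L * ((1 + ‖v‖) * (1 + ‖v'‖))
                  = B * L * (1 + ‖v‖) * (1 + ‖v'‖) by ring]
                apply le_mul_of_one_le_right (by positivity) (by linarith)
        have hP : ‖(x + Real.sqrt t • v.1 + Real.sqrt s • v'.1, y + t • v.2 + s • v'.2)‖
            ≤ B * L * ((1 + ‖v‖) * (1 + ‖v'‖)) :=
          norm_affine_triple_le x y hst ht0 hss hs0 hstL htL hssL hsL hL1 v v'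
        have hQm : ‖(x + Real.sqrt t • v.1, y + t • v.2)‖ ^ m
            ≤ (B * L) ^ m * ((1 + ‖v‖) ^ m * (1 + ‖v'‖) ^ m) := by
          calc ‖(x + Real.sqrt t • v.1, y + t • v.2)‖ ^ m
              ≤ (B * L * ((1 + ‖v‖) * (1 + ‖v'‖))) ^ m :=
                pow_le_pow_left₀ (norm_nonneg _) hQ m
            _ = (B * L) ^ m * ((1 + ‖v‖) ^ m * (1 + ‖v'‖) ^ m) := by
                rw [mul_pow _ ((1 + ‖v‖) * (1 + ‖v'‖)) m,
                  mul_pow (1 + ‖v‖) (1 + ‖v'‖) m]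
        have hPm : ‖(x + Real.sqrt t • v.1 + Real.sqrt s • v'.1,
            y + t • v.2 + s • v'.2)‖ ^ m
            ≤ (B * L) ^ m * ((1 + ‖v‖) ^ m * (1 + ‖v'‖) ^ m) := by
          calc ‖(x + Real.sqrt t • v.1 + Real.sqrt s • v'.1, y + t • v.2 + s • v'.2)‖ ^ m
              ≤ (B * L * ((1 + ‖v‖) * (1 + ‖v'‖))) ^ m :=
                pow_le_pow_left₀ (norm_nonneg _) hP m
            _ = (B * L) ^ m * ((1 + ‖v‖) ^ m * (1 + ‖v'‖) ^ m) := by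
                rw [mul_pow _ ((1 + ‖v‖) * (1 + ‖v'‖)) m,
                  mul_pow (1 + ‖v‖) (1 + ‖v'‖) m]
        have hone : (1:ℝ) ≤ (B * L) ^ m * ((1 + ‖v‖) ^ m * (1 + ‖v'‖) ^ m) := by
          calc (1:ℝ) = 1 ^ m * (1 ^ m * 1 ^ m) := by norm_num
            _ ≤ (B * L) ^ m * ((1 + ‖v‖) ^ m * (1 + ‖v'‖) ^ m) := by
                apply mul_le_mul (pow_le_pow_left₀ zero_le_one hBL1 m)
                · apply mul_le_mul (pow_le_pow_left₀ zero_le_one (by linarith) m)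
                    (pow_le_pow_left₀ zero_le_one (by linarith) m) (by norm_num)
                    (by positivity)
                · norm_num
                · positivity
        have hsum3 : 1 + ‖(x + Real.sqrt t • v.1, y + t • v.2)‖ ^ m
            + ‖(x + Real.sqrt t • v.1 + Real.sqrt s • v'.1, y + t • v.2 + s • v'.2)‖ ^ m
            ≤ 3 * ((B * L) ^ m * ((1 + ‖v‖) ^ m * (1 + ‖v'‖) ^ m)) := by linarith
        calc |g v - Φ (v, v')|
            ≤ C₀ * (1 + ‖(x + Real.sqrt t • v.1, y + t • v.2)‖ ^ m
              + ‖(x + Real.sqrt t • v.1 + Real.sqrt s • v'.1,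
                y + t • v.2 + s • v'.2)‖ ^ m)
              * ‖((-(Real.sqrt s • v'.1), -(s • v'.2)) :
                EuclideanSpace ℝ (Fin d) × EuclideanSpace ℝ (Fin d))‖ := e
          _ ≤ C₀ * (3 * ((B * L) ^ m * ((1 + ‖v‖) ^ m * (1 + ‖v'‖) ^ m)))
              * ((Real.sqrt s + s) * (1 + ‖v'‖)) := by
              apply mul_le_mul (mul_le_mul_of_nonneg_left hsum3 hC₀.le) hnd
                (norm_nonneg _)
              have hp0 : (0:ℝ) ≤ (B * L) ^ m * ((1 + ‖v‖) ^ m * (1 + ‖v'‖) ^ m) := by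
                positivity
              exact mul_nonneg hC₀.le (by linarith)
          _ = cv * (1 + ‖v'‖) ^ (m + 1) := by rw [hcvdef, pow_succ]; ring
      have keyv := E_abs_sub_le S hV (locLip_const (g v)) (hΦvL v) hzv hbv
      rw [S.const_eq (g v)] at keyv
      have momv := E_le_mul_moment S hV hzv hcv0 (m + 1) (fun v' => le_refl _)
      have hfin : |g v - h v| ≤ cv * μ := by
        calc |g v - h v|
            ≤ S.E (fun ω' => cv * (1 + ‖((X ω', Y ω') : EuclideanSpace ℝ (Fin d)
              × EuclideanSpace ℝ (Fin d))‖) ^ (m + 1)) := keyv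
          _ ≤ cv * μ := momv
      have heq : cv * μ = cw * (1 + ‖v‖) ^ m := by rw [hcvdef, hcwdef]; ring
      linarith
    -- outer estimate
    have keyO := E_abs_sub_le S hV hgL hhL hw hbgh
    have momO := E_le_mul_moment S hV hw hcw0 m (fun v => le_refl _)
    have stepO : cw * S.E (fun ω => (1 + ‖((X ω, Y ω) : EuclideanSpace ℝ (Fin d)
        × EuclideanSpace ℝ (Fin d))‖) ^ m) ≤ cw * μ :=
      mul_le_mul_of_nonneg_left hmono hcw0
    have hSig0 : (0:ℝ) ≤ 1 + ‖x‖ ^ (m + 1) + ‖y‖ ^ (m + 1) := by positivity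
    have hBm2 : B ^ m ≤ 3 * 3 ^ m * (1 + ‖x‖ ^ (m + 1) + ‖y‖ ^ (m + 1)) := by
      have t1 : B ^ m ≤ 3 ^ m * (1 + ‖x‖ ^ m + ‖y‖ ^ m) := by
        rw [hBdef]; exact tri3 m hx hy
      have p1 : ‖x‖ ^ m ≤ 1 + ‖x‖ ^ (m + 1) := pow_le_one_add_pow hx (Nat.le_succ m)
      have p2 : ‖y‖ ^ m ≤ 1 + ‖y‖ ^ (m + 1) := pow_le_one_add_pow hy (Nat.le_succ m)
      have h3m : (0:ℝ) < 3 ^ m := by positivity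
      nlinarith [pow_nonneg hx (m + 1), pow_nonneg hy (m + 1)]
    have hnum : cw * μ ≤ max C₁ C₂ * (1 + ‖x‖ ^ (m + 1) + ‖y‖ ^ (m + 1))
        * (s + Real.sqrt s) := by
      have hA0 : (0:ℝ) ≤ 3 * C₀ * L ^ m * μ * μ * (Real.sqrt s + s) := by
        apply mul_nonneg (mul_nonneg (mul_nonneg (mul_nonneg (mul_nonneg (by norm_num)
          hC₀.le) (pow_nonneg hL0.le m)) hμ0.le) hμ0.le) (by linarith)
      calc cw * μ = 3 * C₀ * L ^ m * μ * μ * (Real.sqrt s + s) * B ^ m := by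
            rw [hcwdef, mul_pow]; ring
        _ ≤ 3 * C₀ * L ^ m * μ * μ * (Real.sqrt s + s)
            * (3 * 3 ^ m * (1 + ‖x‖ ^ (m + 1) + ‖y‖ ^ (m + 1))) :=
            mul_le_mul_of_nonneg_left hBm2 hA0
        _ = C₂ * (1 + ‖x‖ ^ (m + 1) + ‖y‖ ^ (m + 1)) * (s + Real.sqrt s) := by
            rw [hC₂def]; ring
        _ ≤ max C₁ C₂ * (1 + ‖x‖ ^ (m + 1) + ‖y‖ ^ (m + 1)) * (s + Real.sqrt s) := by
            apply mul_le_mul_of_nonneg_right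
              (mul_le_mul_of_nonneg_right (le_max_right _ _) hSig0) (by linarith)
    rw [hu t x y, equ]
    exact le_trans keyO (le_trans momO (le_trans stepO hnum))
end
end
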